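/- arXiv:2205.12881 — 2 statements merged into one kernel-verified Lean document; each statement's English description precedes it below -/
import Mathlib

section
/- In a symmetric IID market where each school has a single seat (C = 1) and the ratio of students to schools is ρ = n/(n+k) < 1 for positive integers n, k, the unique (η^IID, V^pois)-stable matching M^IID satisfies AverageRank(M^IID) ≤ ((n+k)/n)·log((n+k)/k). -/
open MeasureTheory Filter
open scoped Classical ENNReal

noncomputable section

/-- A student type: a complete (linear) order on `Option H` (`none` is the outside option `∅`),
together with a priority score in `[0,1]` at each school. -/
abbrev Student (H : Type*) := LinearOrder (Option H) × (H → unitInterval)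

instance (H : Type*) : MeasurableSpace (LinearOrder (Option H)) := ⊤
instance (H : Type*) : TopologicalSpace (LinearOrder (Option H)) := ⊥

/-- `Prefers θ a b` : student `θ` strictly prefers option `a` to option `b`. -/
def Prefers {H : Type*} (θ : Student H) (a b : Option H) : Prop := θ.1.lt b a

/-- Priority of `θ` at option `h` (junk value `1` at the outside option). -/
def priOf {H : Type*} (θ : Student H) : Option H → unitInterval := fun o => o.elim 1 θ.2

abbrev MatchingFun (H : Type*) := Student H → Option H → ℝ
abbrev InterestFun (H : Type*) := H → unitInterval → ℝ
abbrev AdmissionsFun (H : Type*) := Option H → unitInterval → ℝ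

section Defs
variable {H : Type*} [Fintype H]

/-- `M` maps each student to a probability distribution over `Option H`. -/
def IsMatchingFun (M : MatchingFun H) : Prop :=
  ∀ θ : Student H, (∀ h, 0 ≤ M θ h) ∧ ∑ h : Option H, M θ h = 1

/-- Interest functions are componentwise weakly decreasing and nonnegative. -/
def IsInterestFun (I : InterestFun H) : Prop :=
  ∀ h, Antitone (I h) ∧ ∀ p, 0 ≤ I h p

/-- Admissions functions are componentwise weakly increasing with values in `[0,1]`,
and everyone is always admitted to the outside option. -/
def IsAdmissionsFun (A : AdmissionsFun H) : Prop :=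
  (∀ h, Monotone (A h) ∧ ∀ p, A h p ∈ Set.Icc (0:ℝ) 1) ∧ ∀ p, A none p = 1

/-- The interest function `𝓘(M)` of a matching `M`. -/
def interestOf (η : Measure (Student H)) (M : MatchingFun H) : InterestFun H :=
  fun h p => ∫ θ, (if p ≤ θ.2 h then (1:ℝ) else 0) *
    (1 - ∑ h' ∈ Finset.univ.filter (fun h' : Option H => Prefers θ h' (some h)), M θ h') ∂η

/-- The admissions function `𝓐(I)` of an interest function `I`, given a vacancy function `V`
and capacities `C`. -/
def admissionsOf (V : ℝ → ℕ → ℝ) (C : H → ℕ) (I : InterestFun H) : AdmissionsFun H :=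
  fun h p => h.elim 1 fun h0 => V (I h0 p) (C h0)

/-- The matching `𝓜(A)` of an admissions function `A`. -/
def matchingOf (A : AdmissionsFun H) : MatchingFun H := fun θ h =>
  A h (priOf θ h) *
    ∏ h' ∈ Finset.univ.filter (fun h' : Option H => Prefers θ h' h), (1 - A h' (priOf θ h'))

/-- A matching `M` is `(η, V)`-stable if `M = 𝓜(𝓐(𝓘(M)))`. -/
def StableMatching (η : Measure (Student H)) (V : ℝ → ℕ → ℝ) (C : H → ℕ)
    (M : MatchingFun H) : Prop :=
  IsMatchingFun M ∧ M = matchingOf (admissionsOf V C (interestOf η M))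

/-- An interest function `I` is `(η, V)`-stable if `I = 𝓘(𝓜(𝓐(I)))`. -/
def StableInterest (η : Measure (Student H)) (V : ℝ → ℕ → ℝ) (C : H → ℕ)
    (I : InterestFun H) : Prop :=
  IsInterestFun I ∧ I = interestOf η (matchingOf (admissionsOf V C I))

/-- An admissions function `A` is `(η, V)`-stable if `A = 𝓐(𝓘(𝓜(A)))`. -/
def StableAdmissions (η : Measure (Student H)) (V : ℝ → ℕ → ℝ) (C : H → ℕ)
    (A : AdmissionsFun H) : Prop :=
  IsAdmissionsFun A ∧ A = admissionsOf V C (interestOf η (matchingOf A))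

/-- An outcome `(M, I, A)` is `(η, V)`-stable. -/
def StableOutcome (η : Measure (Student H)) (V : ℝ → ℕ → ℝ) (C : H → ℕ)
    (M : MatchingFun H) (I : InterestFun H) (A : AdmissionsFun H) : Prop :=
  IsMatchingFun M ∧ IsInterestFun I ∧ IsAdmissionsFun A ∧
  M = matchingOf A ∧ I = interestOf η M ∧ A = admissionsOf V C I

/-- The deterministic vacancy function `V^det(λ, C) = 1(λ < C)`. -/
def Vdet : ℝ → ℕ → ℝ := fun lam C => if lam < (C : ℝ) then 1 else 0

/-- The Poisson vacancy function `V^pois(λ, C) = Σ_{k<C} e^{-λ} λ^k / k!`. -/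
def Vpois : ℝ → ℕ → ℝ := fun lam C =>
  ∑ k ∈ Finset.range C, Real.exp (-lam) * lam ^ k / (Nat.factorial k : ℝ)

/-- A measure `η` on student types has strict priorities. -/
def StrictPriorities (η : Measure (Student H)) : Prop :=
  ∀ (h : H) (p : unitInterval), η {θ : Student H | Prefers θ (some h) none ∧ θ.2 h = p} = 0

end Defs

section Symmetric
variable {H : Type*} [Fintype H]

/-- The order `r` on `Option H` restricts to the order `s` on `H`. -/
def RestrictsTo (r : LinearOrder (Option H)) (s : LinearOrder H) : Prop :=
  ∀ a b : H, r.lt (some a) (some b) ↔ s.lt a b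

/-- Priorities of a student, as a vector of reals. -/
def priMap : Student H → (H → ℝ) := fun θ h => (θ.2 h : ℝ)

/-- The uniform measure on `[0,1]^H`. -/
def uniformPriors (H : Type*) [Fintype H] : Measure (H → ℝ) :=
  Measure.pi fun _ => volume.restrict (Set.Icc (0:ℝ) 1)

/-- The uniform measure on the diagonal `{p : p_h = p_{h'} for all h, h'}` of `[0,1]^H`. -/
def uniformDiag (H : Type*) [Fintype H] : Measure (H → ℝ) :=
  Measure.map (fun x : ℝ => Function.const H x) (volume.restrict (Set.Icc (0:ℝ) 1))

/-- `η` is a symmetric IID measure: (i) the restriction of the preference order to `H` is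
uniformly distributed (all restrictions are equally likely), and (ii) conditionally on each
complete preference order, the priority vector is uniformly distributed on `[0,1]^H`. -/
def IsSymmetricIID (η : Measure (Student H)) : Prop :=
  (∀ s t : LinearOrder H,
    η {θ : Student H | RestrictsTo θ.1 s} = η {θ : Student H | RestrictsTo θ.1 t}) ∧
  (∀ r : LinearOrder (Option H), ∃ c : ℝ≥0∞,
    Measure.map priMap (η.restrict {θ : Student H | θ.1 = r}) = c • uniformPriors H)

/-- `η` is a symmetric RSD measure: as in the IID case, but conditionally on each preference
order the priority vector is uniformly distributed on the diagonal of `[0,1]^H`. -/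
def IsSymmetricRSD (η : Measure (Student H)) : Prop :=
  (∀ s t : LinearOrder H,
    η {θ : Student H | RestrictsTo θ.1 s} = η {θ : Student H | RestrictsTo θ.1 t}) ∧
  (∀ r : LinearOrder (Option H), ∃ c : ℝ≥0∞,
    Measure.map priMap (η.restrict {θ : Student H | θ.1 = r}) = c • uniformDiag H)

/-- The rank `R_h(θ)`: the number of options weakly preferred to `h` by `θ`. -/
def rankOf (θ : Student H) (h : H) : ℕ :=
  (Finset.univ.filter fun h' : Option H => Prefers θ h' (some h) ∨ h' = some h).card

/-- The average rank of matched students under matching `M`. -/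
def averageRank (η : Measure (Student H)) (M : MatchingFun H) : ℝ :=
  (∫ θ, ∑ h : H, M θ (some h) * (rankOf θ h : ℝ) ∂η) /
  (∫ θ, ∑ h : H, M θ (some h) ∂η)

/-- The number of schools listed (preferred to the outside option) by `θ`. -/
def listCount (θ : Student H) : ℕ :=
  (Finset.univ.filter fun h : H => Prefers θ (some h) none).card

/-- `Enrollment(λ, C) = ∫₀^λ V^pois(x, C) dx`. -/
def enrollment (lam : ℝ) (C : ℕ) : ℝ := ∫ x in (0:ℝ)..lam, Vpois x C

/-- `Λ(ρ, C)`: the smallest nonnegative solution `λ` of `Enrollment(λ, C) = ρ`. -/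
def lambdaOf (ρ : ℝ) (C : ℕ) : ℝ := sInf {lam : ℝ | 0 ≤ lam ∧ enrollment lam C = ρ}

end Symmetric

section Stmt14Aux

open MeasureTheory Set

/-! ### Finiteness of the type of linear orders -/

lemma linearOrder_le_inj {α : Type*} :
    Function.Injective (fun (L : LinearOrder α) => (L.le : α → α → Prop)) := by
  intro A B h
  exact LinearOrder.ext (fun a b => by rw [show A.le = B.le from h])

instance finiteLinearOrder {α : Type*} [Finite α] : Finite (LinearOrder α) :=
  Finite.of_injective _ linearOrder_le_inj

noncomputable instance fintypeLinearOrder {α : Type*} [Finite α] : Fintype (LinearOrder α) :=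
  Fintype.ofFinite _

/-! ### The coordinate measure: `ℝ` with uniform measure on `[0,1]` -/

def RI : Type := ℝ

instance : MeasurableSpace RI := inferInstanceAs (MeasurableSpace ℝ)

noncomputable instance : MeasureSpace RI :=
  { toMeasurableSpace := (inferInstance : MeasurableSpace RI)
    volume := (volume : Measure ℝ).restrict (Set.Icc 0 1) }

instance : IsProbabilityMeasure (volume : Measure RI) := by
  constructor
  show (volume : Measure ℝ).restrict (Set.Icc 0 1) Set.univ = 1
  rw [Measure.restrict_apply_univ, Real.volume_Icc]
  norm_num

lemma uniformPriors_eq_volume_pi (H : Type*) [Fintype H] :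
    uniformPriors H = (volume : Measure (∀ _ : H, RI)) := rfl

instance (H : Type*) [Fintype H] : IsProbabilityMeasure (uniformPriors H) := by
  rw [uniformPriors_eq_volume_pi]
  exact Measure.pi.instIsProbabilityMeasure _

/-- clamping map -/
noncomputable def clamp : ℝ → unitInterval := Set.projIcc (0:ℝ) 1 zero_le_one

lemma clamp_coe (p : unitInterval) : clamp (p : ℝ) = p := Set.projIcc_val zero_le_one p

lemma measurable_clamp : Measurable clamp := continuous_projIcc.measurable

/-! ### Measurability from slices -/

lemma measurable_of_slices {H : Type*} [Fintype H] {f : Student H → ℝ}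
    (hf : ∀ r : LinearOrder (Option H), Measurable fun p : H → unitInterval => f (r, p)) :
    Measurable f := by
  classical
  have hrw : f = fun θ : Student H =>
      ∑ r : LinearOrder (Option H), if θ.1 = r then f (r, θ.2) else 0 := by
    funext θ
    rw [Finset.sum_ite_eq Finset.univ θ.1 (fun r => f (r, θ.2))]
    simp
  rw [hrw]
  refine Finset.measurable_sum _ (fun r _ => ?_)
  have hs : MeasurableSet {θ : Student H | θ.1 = r} := by
    have : {θ : Student H | θ.1 = r} = Prod.fst ⁻¹' {r} := rfl
    rw [this]; exact measurable_fst trivial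
  exact Measurable.ite hs ((hf r).comp measurable_snd) measurable_const

lemma measurable_priMap {H : Type*} [Fintype H] : Measurable (priMap (H := H)) :=
  measurable_pi_lambda _ (fun g =>
    measurable_subtype_coe.comp ((measurable_pi_apply g).comp measurable_snd))

end Stmt14Aux

section Stmt14Count

open MeasureTheory Set

variable {H : Type*} [Fintype H]

/-- The restriction of a linear order on `Option H` to `H`. -/
noncomputable def res (r : LinearOrder (Option H)) : LinearOrder H :=
  letI := r; LinearOrder.lift' some (Option.some_injective H)

lemma res_le (r : LinearOrder (Option H)) (a b : H) :
    (res r).le a b ↔ r.le (some a) (some b) := Iff.rfl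

lemma res_lt (r : LinearOrder (Option H)) (a b : H) :
    (res r).lt a b ↔ r.lt (some a) (some b) := by
  letI := r
  rw [@lt_iff_le_not_ge H (res r).toPreorder, @lt_iff_le_not_ge (Option H) r.toPreorder]
  simp [res_le]

lemma restrictsTo_res (r : LinearOrder (Option H)) : RestrictsTo r (res r) := by
  intro a b; exact (res_lt r a b).symm

lemma le_iff_not_lt' {α : Type*} (L : LinearOrder α) (a b : α) :
    L.le a b ↔ ¬ L.lt b a := by
  letI := L; exact not_lt.symm

lemma restrictsTo_unique {r : LinearOrder (Option H)} {s s' : LinearOrder H}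
    (h : RestrictsTo r s) (h' : RestrictsTo r s') : s = s' := by
  refine LinearOrder.ext (fun a b => ?_)
  show s.le a b ↔ s'.le a b
  rw [le_iff_not_lt' s, le_iff_not_lt' s', ← h b a, ← h' b a]

lemma res_eq_iff_restrictsTo {r : LinearOrder (Option H)} {s : LinearOrder H} :
    res r = s ↔ RestrictsTo r s :=
  ⟨fun h => h ▸ restrictsTo_res r, fun h => restrictsTo_unique (restrictsTo_res r) h⟩

/-- The number of schools strictly above `h` in the order `s`. -/
noncomputable def aboveCount (s : LinearOrder H) (h : H) : ℕ :=
  (Finset.univ.filter (fun g => s.lt h g)).card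

lemma aboveCount_lt_card (s : LinearOrder H) (h : H) :
    aboveCount s h < Fintype.card H := by
  letI := s
  have : (Finset.univ.filter (fun g => s.lt h g)) ⊆ Finset.univ.erase h := by
    intro g hg
    simp only [Finset.mem_filter] at hg
    exact Finset.mem_erase.2 ⟨fun he => absurd hg.2 (he ▸ lt_irrefl _), Finset.mem_univ _⟩
  calc aboveCount s h ≤ (Finset.univ.erase h).card := Finset.card_le_card this
    _ < Fintype.card H := by
        rw [Finset.card_erase_of_mem (Finset.mem_univ h), Finset.card_univ]
        have : 0 < Fintype.card H := Fintype.card_pos_iff.2 ⟨h⟩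
        omega

lemma aboveCount_injective (s : LinearOrder H) :
    Function.Injective (fun h => aboveCount s h) := by
  letI := s
  have key : ∀ a b : H, s.lt a b → aboveCount s b < aboveCount s a := by
    intro a b hab
    apply Finset.card_lt_card
    constructor
    · intro g hg
      simp only [Finset.mem_filter, Finset.mem_univ, true_and] at hg ⊢
      exact lt_trans hab hg
    · intro hsub
      have hb : b ∈ Finset.univ.filter (fun g => s.lt a g) := by
        simp only [Finset.mem_filter, Finset.mem_univ, true_and]; exact hab
      have := hsub hb
      simp only [Finset.mem_filter, Finset.mem_univ, true_and] at this
      exact lt_irrefl _ this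
  intro a b hab
  simp only at hab
  by_contra hne
  rcases lt_or_gt_of_ne (α := H) hne with h1 | h1
  · have := key a b h1; omega
  · have := key b a h1; omega

lemma card_fiber_aboveCount_eq_one (s : LinearOrder H) {i : ℕ} (hi : i < Fintype.card H) :
    (Finset.univ.filter (fun h : H => aboveCount s h = i)).card = 1 := by
  classical
  -- the map h ↦ aboveCount s h is injective into Fin (card H), hence bijective
  let f : H → Fin (Fintype.card H) := fun h => ⟨aboveCount s h, aboveCount_lt_card s h⟩
  have hinj : Function.Injective f := by
    intro a b hab
    exact aboveCount_injective s (congrArg Fin.val hab)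
  have hbij : Function.Bijective f :=
    (Fintype.bijective_iff_injective_and_card f).2 ⟨hinj, by simp⟩
  obtain ⟨h0, hh0⟩ := hbij.2 ⟨i, hi⟩
  rw [Finset.card_eq_one]
  refine ⟨h0, ?_⟩
  ext h
  simp only [Finset.mem_filter, Finset.mem_univ, true_and, Finset.mem_singleton]
  constructor
  · intro hh
    apply hinj
    rw [hh0]
    exact Fin.ext hh
  · rintro rfl
    exact congrArg Fin.val hh0

noncomputable def permOrder (τ : Equiv.Perm H) (s : LinearOrder H) : LinearOrder H :=
  letI := s; LinearOrder.lift' (⇑τ) τ.injective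

lemma permOrder_le (τ : Equiv.Perm H) (s : LinearOrder H) (a b : H) :
    (permOrder τ s).le a b ↔ s.le (τ a) (τ b) := Iff.rfl

lemma permOrder_lt (τ : Equiv.Perm H) (s : LinearOrder H) (a b : H) :
    (permOrder τ s).lt a b ↔ s.lt (τ a) (τ b) := by
  rw [@lt_iff_le_not_ge H (permOrder τ s).toPreorder, @lt_iff_le_not_ge H s.toPreorder]
  simp [permOrder_le]

lemma permOrder_invol {τ : Equiv.Perm H} (hτ : ∀ a, τ (τ a) = a) (s : LinearOrder H) :
    permOrder τ (permOrder τ s) = s := by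
  refine LinearOrder.ext (fun a b => ?_)
  show (permOrder τ (permOrder τ s)).le a b ↔ s.le a b
  rw [permOrder_le, permOrder_le, hτ, hτ]

lemma aboveCount_permOrder (τ : Equiv.Perm H) (s : LinearOrder H) (h : H) :
    aboveCount (permOrder τ s) h = aboveCount s (τ h) := by
  classical
  unfold aboveCount
  refine Finset.card_bij (fun g _ => τ g) ?_ ?_ ?_
  · intro g hg
    simp only [Finset.mem_filter, Finset.mem_univ, true_and] at hg ⊢
    exact (permOrder_lt τ s h g).1 hg
  · intro a _ b _ hab
    exact τ.injective hab
  · intro g' hg'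
    simp only [Finset.mem_filter, Finset.mem_univ, true_and] at hg'
    refine ⟨τ.symm g', ?_, by simp⟩
    simp only [Finset.mem_filter, Finset.mem_univ, true_and, permOrder_lt]
    simpa using hg'

lemma fiber_card_symm (h h' : H) (i : ℕ) :
    (Finset.univ.filter (fun s : LinearOrder H => aboveCount s h = i)).card
      = (Finset.univ.filter (fun s : LinearOrder H => aboveCount s h' = i)).card := by
  classical
  set τ : Equiv.Perm H := @Equiv.swap H (Classical.decEq H) h h' with hτ
  have hsw : ∀ a : H, τ (τ a) = a := fun a => Equiv.swap_apply_self _ _ _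
  have hr : τ h' = h := Equiv.swap_apply_right _ _
  have hl : τ h = h' := Equiv.swap_apply_left _ _
  refine Finset.card_bij' (fun s _ => permOrder τ s) (fun s _ => permOrder τ s) ?_ ?_ ?_ ?_
  · intro s hs
    simp only [Finset.mem_filter, Finset.mem_univ, true_and] at hs ⊢
    rw [aboveCount_permOrder, hr]
    exact hs
  · intro s hs
    simp only [Finset.mem_filter, Finset.mem_univ, true_and] at hs ⊢
    rw [aboveCount_permOrder, hl]
    exact hs
  · intro s _; simpa using permOrder_invol hsw s
  · intro s _; simpa using permOrder_invol hsw s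

lemma card_mul_sum_pow (h : H) (x : ℝ) :
    (Fintype.card H : ℝ) * ∑ s : LinearOrder H, x ^ aboveCount s h
      = (Fintype.card (LinearOrder H) : ℝ) * ∑ i ∈ Finset.range (Fintype.card H), x ^ i := by
  classical
  set m := Fintype.card H with hm
  set K := Fintype.card (LinearOrder H) with hK
  set N : ℕ → H → ℕ := fun i h0 =>
    (Finset.univ.filter (fun s : LinearOrder H => aboveCount s h0 = i)).card with hN
  have fib : ∀ h0 : H, ∑ s : LinearOrder H, x ^ aboveCount s h0
      = ∑ i ∈ Finset.range m, (N i h0 : ℝ) * x ^ i := by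
    intro h0
    rw [← Finset.sum_fiberwise_of_maps_to
      (g := fun s : LinearOrder H => aboveCount s h0) (t := Finset.range m)
      (fun s _ => Finset.mem_range.2 (aboveCount_lt_card s h0))
      (fun s => x ^ aboveCount s h0)]
    refine Finset.sum_congr rfl (fun i _ => ?_)
    have hcongr : ∑ s ∈ Finset.univ.filter
        (fun s : LinearOrder H => aboveCount s h0 = i), x ^ aboveCount s h0
        = ∑ _s ∈ Finset.univ.filter
        (fun s : LinearOrder H => aboveCount s h0 = i), x ^ i :=
      Finset.sum_congr rfl (fun s hs => by rw [(Finset.mem_filter.1 hs).2])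
    rw [hcongr, Finset.sum_const, nsmul_eq_mul]
  have Nsum : ∀ i, i < m → (m : ℕ) * N i h = K := by
    intro i hi
    have hsym : ∀ h0 : H, N i h0 = N i h := fun h0 => fiber_card_symm h0 h i
    have : ∑ h0 : H, N i h0 = K := by
      have swap : ∑ h0 : H, N i h0
          = ∑ s : LinearOrder H, (Finset.univ.filter (fun h0 : H => aboveCount s h0 = i)).card := by
        simp only [hN, Finset.card_filter]
        rw [Finset.sum_comm]
      rw [swap]
      rw [Finset.sum_congr rfl (fun s _ => card_fiber_aboveCount_eq_one s hi)]
      simp [hK]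
    rw [← this, Finset.sum_congr rfl (fun h0 _ => hsym h0), Finset.sum_const, smul_eq_mul,
      Finset.card_univ]
  rw [fib h, Finset.mul_sum, Finset.mul_sum]
  refine Finset.sum_congr rfl (fun i hi => ?_)
  have := Nsum i (Finset.mem_range.1 hi)
  have hcast : (m : ℝ) * (N i h : ℝ) = (K : ℝ) := by exact_mod_cast congrArg (Nat.cast (R := ℝ)) this
  rw [← mul_assoc, hcast]
end Stmt14Count

section Stmt14Pointwise

open MeasureTheory

variable {H : Type*} [Fintype H]

lemma sum_matchingOf_eq (A : AdmissionsFun H) (θ : Student H) (U : Finset (Option H))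
    (hU : ∀ o ∈ U, ∀ o', θ.1.lt o o' → o' ∈ U) :
    ∑ o ∈ U, matchingOf A θ o = 1 - ∏ o ∈ U, (1 - A o (priOf θ o)) := by
  classical
  suffices hgen : ∀ (n : ℕ) (U : Finset (Option H)),
      (∀ o ∈ U, ∀ o', θ.1.lt o o' → o' ∈ U) → U.card = n →
      ∑ o ∈ U, matchingOf A θ o = 1 - ∏ o ∈ U, (1 - A o (priOf θ o)) by
    exact hgen U.card U hU rfl
  clear hU U
  intro n
  induction n with
  | zero =>
      intro U hU hcard
      rw [Finset.card_eq_zero] at hcard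
      subst hcard; simp
  | succ n ih =>
      intro U hU hcard
      have hne : U.Nonempty := Finset.card_pos.1 (by omega)
      letI := θ.1
      obtain ⟨m₀, hm₀, hmin⟩ := Finset.exists_min_image U id hne
      have hminlt : ∀ o' ∈ U, ¬ θ.1.lt o' m₀ := fun o' ho' hlt =>
        absurd (hmin o' ho') (not_le.2 hlt)
      have hfilter : Finset.univ.filter (fun o' => Prefers θ o' m₀) = U.erase m₀ := by
        ext o'
        simp only [Finset.mem_filter, Finset.mem_univ, true_and, Finset.mem_erase]
        constructor
        · intro hp
          have ho'U : o' ∈ U := hU m₀ hm₀ o' hp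
          exact ⟨fun he => absurd hp (he ▸ lt_irrefl _), ho'U⟩
        · rintro ⟨hne', ho'U⟩
          rcases lt_trichotomy (α := Option H) o' m₀ with hlt | heq | hgt
          · exact absurd hlt (hminlt o' ho'U)
          · exact absurd heq hne'
          · exact hgt
      have hU' : ∀ o ∈ U.erase m₀, ∀ o', θ.1.lt o o' → o' ∈ U.erase m₀ := by
        intro o ho o' hlt
        have hoU : o ∈ U := Finset.mem_of_mem_erase ho
        refine Finset.mem_erase.2 ⟨?_, hU o hoU o' hlt⟩
        rintro rfl
        exact hminlt o hoU hlt
      have hcard' : (U.erase m₀).card = n := by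
        rw [Finset.card_erase_of_mem hm₀]; omega
      have hIH := ih (U.erase m₀) hU' hcard'
      have hM₀ : matchingOf A θ m₀
          = A m₀ (priOf θ m₀) * ∏ o ∈ U.erase m₀, (1 - A o (priOf θ o)) := by
        rw [matchingOf, hfilter]
      rw [← Finset.add_sum_erase U _ hm₀, hIH, hM₀, ← Finset.mul_prod_erase U _ hm₀]
      ring

lemma prefersFilter_upclosed (θ : Student H) (o₀ : Option H) :
    ∀ o ∈ Finset.univ.filter (fun o => Prefers θ o o₀), ∀ o', θ.1.lt o o' →
      o' ∈ Finset.univ.filter (fun o => Prefers θ o o₀) := by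
  intro o ho o' hlt
  rw [Finset.mem_filter] at ho ⊢
  simp only [Finset.mem_filter, Finset.mem_univ, true_and, Prefers] at ho ⊢
  letI := θ.1
  exact lt_trans ho hlt

lemma one_sub_sum_prefers (A : AdmissionsFun H) (θ : Student H) (o₀ : Option H) :
    1 - ∑ o ∈ Finset.univ.filter (fun o => Prefers θ o o₀), matchingOf A θ o
      = ∏ o ∈ Finset.univ.filter (fun o => Prefers θ o o₀), (1 - A o (priOf θ o)) := by
  rw [sum_matchingOf_eq A θ _ (prefersFilter_upclosed θ o₀)]
  ring

lemma matchingOf_unlisted (A : AdmissionsFun H) (hA1 : ∀ p, A none p = 1) (θ : Student H)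
    (g : H) (hg : θ.1.lt (some g) none) : matchingOf A θ (some g) = 0 := by
  rw [matchingOf]
  have hmem : (none : Option H) ∈ Finset.univ.filter (fun o => Prefers θ o (some g)) := by
    rw [Finset.mem_filter]
    simp only [Finset.mem_filter, Finset.mem_univ, true_and, Prefers]
    exact hg
  rw [Finset.prod_eq_zero hmem (by rw [hA1]; ring)]
  ring

lemma rank_bound_pointwise (A : AdmissionsFun H) (hA1 : ∀ p, A none p = 1) (θ : Student H)
    (hs : ∑ o : Option H, matchingOf A θ o = 1) (hnn : ∀ o, 0 ≤ matchingOf A θ o) :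
    ∑ h : H, matchingOf A θ (some h) * (rankOf θ h : ℝ)
      ≤ ∑ h : H, ∏ o ∈ Finset.univ.filter (fun o => Prefers θ o (some h)),
          (1 - A o (priOf θ o)) := by
  classical
  letI := θ.1
  -- rewrite the RHS as a double sum
  have hrhs : ∀ h : H, ∏ o ∈ Finset.univ.filter (fun o => Prefers θ o (some h)),
      (1 - A o (priOf θ o))
      = ∑ o ∈ Finset.univ.filter (fun o => ¬ Prefers θ o (some h)), matchingOf A θ o := by
    intro h
    rw [← one_sub_sum_prefers A θ (some h)]
    have := Finset.sum_filter_add_sum_filter_not Finset.univ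
      (fun o => Prefers θ o (some h)) (fun o => matchingOf A θ o)
    rw [hs] at this
    linarith
  have hswap : ∑ h : H, ∑ o ∈ Finset.univ.filter (fun o => ¬ Prefers θ o (some h)),
      matchingOf A θ o
      = ∑ o : Option H, matchingOf A θ o *
          ((Finset.univ.filter (fun h : H => ¬ Prefers θ o (some h))).card : ℝ) := by
    have h1 : ∀ h : H, ∑ o ∈ Finset.univ.filter (fun o => ¬ Prefers θ o (some h)),
        matchingOf A θ o
        = ∑ o : Option H, if ¬ Prefers θ o (some h) then matchingOf A θ o else 0 := by
      intro h; rw [Finset.sum_filter]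
    simp only [h1]
    rw [Finset.sum_comm]
    refine Finset.sum_congr rfl (fun o _ => ?_)
    rw [← Finset.sum_filter, Finset.sum_const, nsmul_eq_mul, mul_comm]
  -- compare termwise
  have key : ∀ h : H, matchingOf A θ (some h) * (rankOf θ h : ℝ)
      ≤ matchingOf A θ (some h) *
        ((Finset.univ.filter (fun h' : H => ¬ Prefers θ (some h) (some h'))).card : ℝ) := by
    intro h
    rcases lt_trichotomy (α := Option H) (none : Option H) (some h) with hlist | habs | hunlist
    · -- listed
      refine mul_le_mul_of_nonneg_left ?_ (hnn (some h))
      have hcard : rankOf θ h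
          ≤ (Finset.univ.filter (fun h' : H => ¬ Prefers θ (some h) (some h'))).card := by
        rw [rankOf]
        refine Finset.card_le_card_of_injOn (fun o => o.getD h) ?_ ?_
        · intro o ho
          rw [Finset.mem_coe, Finset.mem_filter] at ho
          rw [Finset.mem_coe, Finset.mem_filter]
          simp only [Finset.mem_filter, Finset.mem_univ, true_and, Prefers] at ho ⊢
          have hosome : ∃ h' : H, o = some h' := by
            match o, ho with
            | some h', _ => exact ⟨h', rfl⟩
            | none, ho =>
                rcases ho with hp | he
                · exact absurd (lt_trans hp hlist) (lt_irrefl _)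
                · exact absurd he (by simp)
          obtain ⟨h', rfl⟩ := hosome
          simp only [Option.getD_some]
          rcases ho with hp | he
          · exact fun hlt => absurd (lt_trans hp hlt) (lt_irrefl _)
          · rw [show h' = h from Option.some_injective H he]
            exact lt_irrefl _
        · intro o ho o' ho' heq
          simp only [Finset.coe_filter, Set.mem_setOf_eq] at ho ho'
          have hno : ∀ o'' : Option H, (Prefers θ o'' (some h) ∨ o'' = some h) → o'' ≠ none := by
            rintro o'' ho'' rfl
            rcases ho'' with hp | he
            · exact absurd (lt_trans hp hlist) (lt_irrefl _)
            · exact absurd he (by simp)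
          match o, o', heq with
          | some a, some b, heq => simpa using heq
          | none, _, _ => exact absurd rfl (hno none ho.2)
          | some a, none, _ => exact absurd rfl (hno none ho'.2)
      exact_mod_cast hcard
    · exact absurd habs (by simp)
    · -- unlisted
      rw [matchingOf_unlisted A hA1 θ h hunlist]
      simp
  calc ∑ h : H, matchingOf A θ (some h) * (rankOf θ h : ℝ)
      ≤ ∑ h : H, matchingOf A θ (some h) *
          ((Finset.univ.filter (fun h' : H => ¬ Prefers θ (some h) (some h'))).card : ℝ) :=
        Finset.sum_le_sum (fun h _ => key h)
    _ ≤ ∑ o : Option H, matchingOf A θ o *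
          ((Finset.univ.filter (fun h : H => ¬ Prefers θ o (some h))).card : ℝ) := by
        rw [Fintype.sum_option (f := fun o : Option H => matchingOf A θ o *
          ((Finset.univ.filter (fun h : H => ¬ Prefers θ o (some h))).card : ℝ))]
        have : 0 ≤ matchingOf A θ none *
            ((Finset.univ.filter (fun h : H => ¬ Prefers θ none (some h))).card : ℝ) :=
          mul_nonneg (hnn none) (by positivity)
        linarith
    _ = ∑ h : H, ∑ o ∈ Finset.univ.filter (fun o => ¬ Prefers θ o (some h)),
          matchingOf A θ o := hswap.symm
    _ = _ := Finset.sum_congr rfl (fun h _ => (hrhs h).symm)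

end Stmt14Pointwise

section Stmt14Meas

open MeasureTheory Set

variable {H : Type*} [Fintype H]

lemma Vpois_one (x : ℝ) : Vpois x 1 = Real.exp (-x) := by
  simp [Vpois]

lemma measurable_indicator_ge (g : H) (p : unitInterval) :
    Measurable (fun θ : Student H => if p ≤ θ.2 g then (1:ℝ) else 0) := by
  have hset : MeasurableSet {θ : Student H | p ≤ θ.2 g} := by
    have he : {θ : Student H | p ≤ θ.2 g}
        = (fun θ : Student H => ((θ.2 g : ℝ)))⁻¹' (Ici (p:ℝ)) := by
      ext θ
      simp only [Set.mem_setOf_eq, Set.mem_preimage, Set.mem_Ici, Subtype.coe_le_coe]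
    rw [he]
    exact (measurable_subtype_coe.comp ((measurable_pi_apply g).comp measurable_snd))
      measurableSet_Ici
  exact Measurable.ite hset measurable_const measurable_const

variable (η : Measure (Student H)) [IsFiniteMeasure η]

lemma measurable_interestOf (M : MatchingFun H) (hMf : IsMatchingFun M) (g : H) :
    Measurable (fun p : unitInterval => interestOf η M g p) := by
  classical
  set G : Student H → ℝ := fun θ =>
    1 - ∑ h' ∈ Finset.univ.filter (fun h' : Option H => Prefers θ h' (some g)), M θ h' with hG
  have hG0 : ∀ θ, 0 ≤ G θ := by
    intro θ
    have h1 : ∑ h' ∈ Finset.univ.filter (fun h' : Option H => Prefers θ h' (some g)), M θ h'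
        ≤ ∑ h' : Option H, M θ h' :=
      Finset.sum_le_sum_of_subset_of_nonneg (Finset.filter_subset _ _)
        (fun o _ _ => (hMf θ).1 o)
    have h2 := (hMf θ).2
    simp only [hG]; linarith
  have hG1 : ∀ θ, G θ ≤ 1 := by
    intro θ
    have h1 : (0:ℝ) ≤ ∑ h' ∈ Finset.univ.filter
        (fun h' : Option H => Prefers θ h' (some g)), M θ h' :=
      Finset.sum_nonneg (fun o _ => (hMf θ).1 o)
    simp only [hG]; linarith
  set F : unitInterval → Student H → ℝ :=
    fun p θ => (if p ≤ θ.2 g then (1:ℝ) else 0) * G θ with hF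
  have hFval : ∀ p, interestOf η M g p = ∫ θ, F p θ ∂η := fun p => rfl
  have hF0 : ∀ p θ, 0 ≤ F p θ := by
    intro p θ
    simp only [hF]
    by_cases h : p ≤ θ.2 g <;> simp [h, hG0 θ]
  have hF1 : ∀ p θ, F p θ ≤ 1 := by
    intro p θ
    simp only [hF]
    by_cases h : p ≤ θ.2 g <;> simp [h, hG1 θ]
  set Good : Set unitInterval := {p | AEStronglyMeasurable (F p) η} with hGood
  have hup : ∀ p q : unitInterval, p ≤ q → p ∈ Good → q ∈ Good := by
    intro p q hpq hp
    have heq : F q = fun θ => (if q ≤ θ.2 g then (1:ℝ) else 0) * F p θ := by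
      funext θ
      by_cases h1 : q ≤ θ.2 g
      · have h2 : p ≤ θ.2 g := le_trans hpq h1
        simp [hF, h1, h2]
      · simp [hF, h1]
    show AEStronglyMeasurable (F q) η
    rw [heq]
    exact ((measurable_indicator_ge g q).aestronglyMeasurable).mul hp
  have hint : ∀ p ∈ Good, Integrable (F p) η := by
    intro p hp
    refine Integrable.mono' (integrable_const 1) hp (ae_of_all _ fun θ => ?_)
    rw [Real.norm_eq_abs, abs_le]
    exact ⟨by linarith [hF0 p θ], hF1 p θ⟩
  have hanti : ∀ p q : unitInterval, p ∈ Good → q ∈ Good → p ≤ q →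
      interestOf η M g q ≤ interestOf η M g p := by
    intro p q hp hq hpq
    rw [hFval p, hFval q]
    refine integral_mono (hint q hq) (hint p hp) (fun θ => ?_)
    simp only [hF]
    by_cases h1 : q ≤ θ.2 g
    · have h2 : p ≤ θ.2 g := le_trans hpq h1
      simp [h1, h2]
    · by_cases h2 : p ≤ θ.2 g <;> simp [h1, h2, hG0 θ]
  have hzero : ∀ p, p ∉ Good → interestOf η M g p = 0 := by
    intro p hp
    rw [hFval p]
    exact integral_non_aestronglyMeasurable hp
  have hInonneg : ∀ p, 0 ≤ interestOf η M g p := by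
    intro p
    rw [hFval p]
    exact integral_nonneg (fun θ => hF0 p θ)
  have hIle : ∀ p ∈ Good, interestOf η M g p ≤ (η Set.univ).toReal := by
    intro p hp
    rw [hFval p]
    calc ∫ θ, F p θ ∂η ≤ ∫ _θ, (1:ℝ) ∂η :=
          integral_mono (hint p hp) (integrable_const 1) (fun θ => hF1 p θ)
      _ = (η Set.univ).toReal := by simp [Measure.real]
  by_cases hne : Good.Nonempty
  · -- nonempty case
    set cv : unitInterval → ℝ := fun p => (p : ℝ) with hcv
    set r0 : ℝ := sInf (cv '' Good) with hr0
    have hbdd : BddBelow (cv '' Good) := ⟨0, by rintro x ⟨q, _, rfl⟩; exact q.2.1⟩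
    have himgne : (cv '' Good).Nonempty := hne.image _
    have hle : ∀ p ∈ Good, r0 ≤ (p:ℝ) := fun p hp => csInf_le hbdd ⟨p, hp, rfl⟩
    have hGoodIoi : ∀ p : unitInterval, r0 < (p:ℝ) → p ∈ Good := by
      intro p hp
      obtain ⟨x, ⟨q, hq, rfl⟩, hxlt⟩ := exists_lt_of_csInf_lt himgne hp
      exact hup q p (by exact_mod_cast hxlt.le) hq
    have hGoodMeas : MeasurableSet Good := by
      by_cases hmem : ∃ p ∈ Good, (p:ℝ) = r0
      · have he : Good = (fun p : unitInterval => (p:ℝ)) ⁻¹' (Ici r0) := by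
          ext p
          simp only [Set.mem_preimage, Set.mem_Ici]
          constructor
          · intro hp; exact hle p hp
          · intro hp
            rcases eq_or_lt_of_le hp with he' | hlt
            · obtain ⟨p0, hp0, hp0e⟩ := hmem
              have hpe : p = p0 := Subtype.coe_injective (he'.symm.trans hp0e.symm)
              rwa [hpe]
            · exact hGoodIoi p hlt
        rw [he]
        exact measurable_subtype_coe measurableSet_Ici
      · have he : Good = (fun p : unitInterval => (p:ℝ)) ⁻¹' (Ioi r0) := by
          ext p
          simp only [Set.mem_preimage, Set.mem_Ioi]
          constructor
          · intro hp
            rcases eq_or_lt_of_le (hle p hp) with he' | hlt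
            · exact absurd ⟨p, hp, he'.symm⟩ hmem
            · exact hlt
          · intro hp; exact hGoodIoi p hp
        rw [he]
        exact measurable_subtype_coe measurableSet_Ioi
    set T : unitInterval → ℝ :=
      fun p => sSup ((fun q => interestOf η M g q) '' (Good ∩ Ici p)) with hT
    have hTbddAbove : ∀ p : unitInterval,
        BddAbove ((fun q => interestOf η M g q) '' (Good ∩ Ici p)) := by
      intro p
      refine ⟨(η Set.univ).toReal, ?_⟩
      rintro x ⟨q, ⟨hq, _⟩, rfl⟩
      exact hIle q hq
    have hTanti : Antitone T := by
      intro p p' hpp'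
      by_cases hempty : (Good ∩ Ici p').Nonempty
      · refine csSup_le_csSup (hTbddAbove p) (hempty.image _) ?_
        exact Set.image_mono (Set.inter_subset_inter_right _ (Set.Ici_subset_Ici.2 hpp'))
      · rw [Set.not_nonempty_iff_eq_empty] at hempty
        simp only [hT, hempty, Set.image_empty, Real.sSup_empty]
        by_cases hempty2 : (Good ∩ Ici p).Nonempty
        · obtain ⟨q, hq⟩ := hempty2
          exact le_csSup_of_le (hTbddAbove p) ⟨q, hq, rfl⟩ (hInonneg q)
        · rw [Set.not_nonempty_iff_eq_empty] at hempty2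
          simp [hempty2, Real.sSup_empty]
    have hTeq : ∀ p ∈ Good, T p = interestOf η M g p := by
      intro p hp
      refine le_antisymm ?_ ?_
      · refine csSup_le (⟨interestOf η M g p, p, ⟨hp, le_refl p⟩, rfl⟩) ?_
        rintro x ⟨q, ⟨hq, hq2⟩, rfl⟩
        exact hanti p q hp hq hq2
      · exact le_csSup (hTbddAbove p) ⟨p, ⟨hp, le_refl p⟩, rfl⟩
    have hfun : (fun p : unitInterval => interestOf η M g p)
        = Good.piecewise T (fun _ => 0) := by
      funext p
      by_cases hp : p ∈ Good
      · rw [Set.piecewise_eq_of_mem _ _ _ hp, hTeq p hp]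
      · rw [Set.piecewise_eq_of_notMem _ _ _ hp, hzero p hp]
    rw [hfun]
    haveI : OrdConnected (Set.Icc (0:ℝ) 1) := Set.ordConnected_Icc
    exact Measurable.piecewise hGoodMeas hTanti.measurable measurable_const
  · -- Good is empty
    rw [Set.not_nonempty_iff_eq_empty] at hne
    have hfun : (fun p : unitInterval => interestOf η M g p) = fun _ => 0 := by
      funext p
      exact hzero p (by rw [hne]; exact Set.notMem_empty p)
    rw [hfun]
    exact measurable_const

lemma interestOf_nonneg (M : MatchingFun H) (hMf : IsMatchingFun M) (g : H) (p : unitInterval) :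
    0 ≤ interestOf η M g p := by
  classical
  refine integral_nonneg (fun θ => ?_)
  have h1 : ∑ h' ∈ Finset.univ.filter (fun h' : Option H => Prefers θ h' (some g)), M θ h'
      ≤ ∑ h' : Option H, M θ h' :=
    Finset.sum_le_sum_of_subset_of_nonneg (Finset.filter_subset _ _)
      (fun o _ _ => (hMf θ).1 o)
  have h2 := (hMf θ).2
  by_cases h : p ≤ θ.2 g <;> simp [h] <;> linarith

lemma measurable_admissionsOf (M : MatchingFun H) (hMf : IsMatchingFun M) (o : Option H) :
    Measurable (admissionsOf Vpois (fun _ => 1) (interestOf η M) o) := by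
  match o with
  | none => exact measurable_const
  | some g =>
      have he : admissionsOf Vpois (fun _ => 1) (interestOf η M) (some g)
          = fun p => Real.exp (-(interestOf η M g p)) := by
        funext p
        show Vpois (interestOf η M g p) 1 = _
        rw [Vpois_one]
      rw [he]
      exact Real.measurable_exp.comp (measurable_interestOf η M hMf g).neg

lemma admissionsOf_le_one (M : MatchingFun H) (hMf : IsMatchingFun M) (o : Option H)
    (p : unitInterval) : admissionsOf Vpois (fun _ => 1) (interestOf η M) o p ≤ 1 := by
  match o with
  | none => exact le_refl 1
  | some g =>
      show Vpois (interestOf η M g p) 1 ≤ 1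
      rw [Vpois_one, Real.exp_le_one_iff, neg_nonpos]
      exact interestOf_nonneg η M hMf g p

lemma admissionsOf_nonneg (M : MatchingFun H) (o : Option H) (p : unitInterval) :
    0 ≤ admissionsOf Vpois (fun _ => 1) (interestOf η M) o p := by
  match o with
  | none => exact zero_le_one
  | some g =>
      show 0 ≤ Vpois (interestOf η M g p) 1
      rw [Vpois_one]
      exact (Real.exp_pos _).le

end Stmt14Meas

section Stmt14Engine

open MeasureTheory Set

variable {H : Type*} [Fintype H]

noncomputable def cR (η : Measure (Student H)) (r : LinearOrder (Option H)) : ℝ :=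
  (η {θ : Student H | θ.1 = r}).toReal

noncomputable def qA (A : AdmissionsFun H) (g : H) : ℝ :=
  ∫ t : RI, A (some g) (clamp (t : ℝ))

noncomputable def Bef (r : LinearOrder (Option H)) (h : H) : Finset H :=
  Finset.univ.filter (fun g => r.lt (some h) (some g))

def ListedP (r : LinearOrder (Option H)) (h : H) : Prop := r.lt none (some h)

noncomputable def UU (r : LinearOrder (Option H)) (h : H) : Finset (Option H) :=
  Finset.univ.filter
    (fun o => Prefers ((r, fun _ => (0 : unitInterval)) : Student H) o (some h))

lemma mem_UU {r : LinearOrder (Option H)} {h : H} {o : Option H} :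
    o ∈ UU r h ↔ r.lt (some h) o := by
  rw [UU, Finset.mem_filter]
  simp [Prefers]

lemma filter_prefers_eq {r : LinearOrder (Option H)} {h : H} {θ : Student H}
    (hθ : θ.1 = r) :
    Finset.univ.filter (fun o => Prefers θ o (some h)) = UU r h := by
  ext o
  rw [Finset.mem_filter, mem_UU]
  subst hθ
  exact ⟨fun hx => hx.2, fun hx => ⟨Finset.mem_univ _, hx⟩⟩

noncomputable def lamOf (η : Measure (Student H)) (A : AdmissionsFun H) (h : H) : ℝ :=
  ∑ r : LinearOrder (Option H),
    if ListedP r h then cR η r * ∏ g ∈ Bef r h, (1 - qA A g) else 0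

lemma measurableSet_fiber (r : LinearOrder (Option H)) :
    MeasurableSet {θ : Student H | θ.1 = r} := by
  have : {θ : Student H | θ.1 = r} = Prod.fst ⁻¹' {r} := rfl
  rw [this]; exact measurable_fst trivial

lemma cR_nonneg (η : Measure (Student H)) (r : LinearOrder (Option H)) : 0 ≤ cR η r :=
  ENNReal.toReal_nonneg

lemma qA_nonneg (A : AdmissionsFun H) (hA0 : ∀ o p, 0 ≤ A o p) (g : H) : 0 ≤ qA A g :=
  integral_nonneg (fun t => hA0 _ _)

lemma qA_le_one (A : AdmissionsFun H) (hAm : ∀ o, Measurable (A o))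
    (hA0 : ∀ o p, 0 ≤ A o p) (hAle : ∀ o p, A o p ≤ 1) (g : H) : qA A g ≤ 1 := by
  have hint : Integrable (fun t : RI => A (some g) (clamp (t:ℝ))) volume := by
    refine Integrable.mono' (integrable_const 1)
      (((hAm (some g)).comp measurable_clamp).aestronglyMeasurable) (ae_of_all _ fun t => ?_)
    rw [Real.norm_eq_abs, abs_le]
    exact ⟨by linarith [hA0 (some g) (clamp (t:ℝ))], hAle _ _⟩
  calc qA A g ≤ ∫ _t : RI, (1:ℝ) := integral_mono hint (integrable_const 1) (fun t => hAle _ _)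
    _ = 1 := by simp

lemma integrable_A_clamp (A : AdmissionsFun H) (hAm : ∀ o, Measurable (A o))
    (hA0 : ∀ o p, 0 ≤ A o p) (hAle : ∀ o p, A o p ≤ 1) (g : H) :
    Integrable (fun t : RI => A (some g) (clamp (t:ℝ))) volume := by
  refine Integrable.mono' (integrable_const 1)
    (((hAm (some g)).comp measurable_clamp).aestronglyMeasurable) (ae_of_all _ fun t => ?_)
  rw [Real.norm_eq_abs, abs_le]
  exact ⟨by linarith [hA0 (some g) (clamp (t:ℝ))], hAle _ _⟩

variable (η : Measure (Student H)) [IsFiniteMeasure η]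

lemma integral_partition {f : Student H → ℝ} (hf : Integrable f η) :
    ∫ θ, f θ ∂η = ∑ r : LinearOrder (Option H), ∫ θ in {θ : Student H | θ.1 = r}, f θ ∂η := by
  classical
  have hpt : f = fun θ => ∑ r : LinearOrder (Option H),
      Set.indicator {θ' : Student H | θ'.1 = r} f θ := by
    funext θ
    rw [Finset.sum_congr rfl (fun r _ => Set.indicator_apply _ _ _)]
    simp only [Set.mem_setOf_eq]
    rw [Finset.sum_ite_eq Finset.univ θ.1 (fun _ => f θ)]
    simp
  conv_lhs => rw [hpt]
  rw [integral_finset_sum _ (fun r _ => hf.indicator (measurableSet_fiber r))]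
  exact Finset.sum_congr rfl (fun r _ => integral_indicator (measurableSet_fiber r))

lemma engine
    (hη2 : ∀ r : LinearOrder (Option H), ∃ c : ℝ≥0∞,
      Measure.map priMap (η.restrict {θ : Student H | θ.1 = r}) = c • uniformPriors H)
    (A : AdmissionsFun H)
    (hA1 : ∀ p, A none p = 1)
    (hAm : ∀ o, Measurable (A o)) (hA0 : ∀ o p, 0 ≤ A o p) (hAle : ∀ o p, A o p ≤ 1)
    (h : H) (φ : unitInterval → ℝ) (hφm : Measurable φ)
    (hφ0 : ∀ t, 0 ≤ φ t) (hφ1 : ∀ t, φ t ≤ 1) :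
    ∫ θ, φ (θ.2 h) * ∏ o ∈ Finset.univ.filter (fun o => Prefers θ o (some h)),
        (1 - A o (priOf θ o)) ∂η
      = (∫ t : RI, φ (clamp (t : ℝ))) * lamOf η A h := by
  classical
  set F : Student H → ℝ := fun θ => φ (θ.2 h) * ∏ o ∈ Finset.univ.filter
    (fun o => Prefers θ o (some h)), (1 - A o (priOf θ o)) with hF
  show (∫ θ, F θ ∂η) = (∫ t : RI, φ (clamp (t : ℝ))) * lamOf η A h
  -- slice form
  have hslice : ∀ (r : LinearOrder (Option H)) (p : H → unitInterval),
      F (r, p) = φ (p h) * ∏ o ∈ UU r h, (1 - A o (priOf (r, p) o)) := by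
    intro r p
    rw [hF]
    show φ (p h) * _ = _
    rw [filter_prefers_eq (θ := ((r, p) : Student H)) rfl]
  -- measurability of F
  have hFmeas : Measurable F := by
    refine measurable_of_slices (fun r => ?_)
    have heq : (fun p : H → unitInterval => F (r, p))
        = fun p => φ (p h) * ∏ o ∈ UU r h, (1 - A o (priOf (r, p) o)) :=
      funext (fun p => hslice r p)
    rw [heq]
    refine (hφm.comp (measurable_pi_apply h)).mul ?_
    refine Finset.measurable_prod _ (fun o _ => ?_)
    match o with
    | none =>
        exact (show Measurable (fun _ : H → unitInterval => (1:ℝ) - A none 1)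
          from measurable_const)
    | some g =>
        exact (measurable_const.sub ((hAm (some g)).comp (measurable_pi_apply g)))
  -- bounds on F
  have hprod01 : ∀ θ : Student H, 0 ≤ (∏ o ∈ Finset.univ.filter
      (fun o => Prefers θ o (some h)), (1 - A o (priOf θ o)))
      ∧ (∏ o ∈ Finset.univ.filter (fun o => Prefers θ o (some h)),
          (1 - A o (priOf θ o))) ≤ 1 := by
    intro θ
    constructor
    · exact Finset.prod_nonneg (fun o _ => by linarith [hAle o (priOf θ o)])
    · exact Finset.prod_le_one (fun o _ => by linarith [hAle o (priOf θ o)])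
        (fun o _ => by linarith [hA0 o (priOf θ o)])
  have hF0 : ∀ θ, 0 ≤ F θ := fun θ => mul_nonneg (hφ0 _) (hprod01 θ).1
  have hF1 : ∀ θ, F θ ≤ 1 := by
    intro θ
    calc F θ ≤ 1 * 1 := mul_le_mul (hφ1 _) (hprod01 θ).2 (hprod01 θ).1 zero_le_one
      _ = 1 := by ring
  have hFint : Integrable F η := by
    refine Integrable.mono' (integrable_const 1) hFmeas.aestronglyMeasurable
      (ae_of_all _ fun θ => ?_)
    rw [Real.norm_eq_abs, abs_le]
    exact ⟨by linarith [hF0 θ], hF1 θ⟩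
  -- per-slice computation
  have hval : ∀ r : LinearOrder (Option H),
      ∫ θ in {θ : Student H | θ.1 = r}, F θ ∂η
        = if ListedP r h then
            cR η r * ((∫ t : RI, φ (clamp (t:ℝ))) * ∏ g ∈ Bef r h, (1 - qA A g))
          else 0 := by
    intro r
    by_cases hlist : ListedP r h
    · rw [if_pos hlist]
      -- the product over options above `h` is the product over `Bef r h`
      have hUimg : UU r h = (Bef r h).image some := by
        ext o
        rw [mem_UU]
        simp only [Finset.mem_image, Bef, Finset.mem_filter, Finset.mem_univ, true_and]
        constructor
        · intro ho
          match o with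
          | none =>
              exfalso
              letI := r
              exact absurd (lt_trans hlist ho) (lt_irrefl _)
          | some g => exact ⟨g, ho, rfl⟩
        · rintro ⟨g, hg, rfl⟩
          exact hg
      -- the product function on priors
      set pf : H → RI → ℝ := fun g t =>
        if g = h then φ (clamp t) else if g ∈ Bef r h then 1 - A (some g) (clamp t) else 1
        with hpf
      set Fr : (H → ℝ) → ℝ := fun x => ∏ g : H, pf g (x g) with hFr
      have hBefsub : Bef r h ⊆ Finset.univ.erase h := by
        intro g hg
        simp only [Bef, Finset.mem_filter, Finset.mem_univ, true_and] at hg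
        refine Finset.mem_erase.2 ⟨?_, Finset.mem_univ _⟩
        rintro rfl
        letI := r
        exact absurd hg (lt_irrefl _)
      have hsplit : ∀ u : H → ℝ, Fr u = φ (clamp (u h)) *
          ∏ g ∈ Bef r h, (1 - A (some g) (clamp (u g))) := by
        intro u
        show ∏ g : H, pf g (u g) = _
        rw [← Finset.mul_prod_erase Finset.univ (fun g => pf g (u g)) (Finset.mem_univ h)]
        have h1 : pf h (u h) = φ (clamp (u h)) := by simp [hpf]
        have h2 : ∏ g ∈ Finset.univ.erase h, pf g (u g)
            = ∏ g ∈ Bef r h, (1 - A (some g) (clamp (u g))) := by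
          have hcongr : ∏ g ∈ Finset.univ.erase h, pf g (u g)
              = ∏ g ∈ Finset.univ.erase h,
                (if g ∈ Bef r h then 1 - A (some g) (clamp (u g)) else 1) := by
            refine Finset.prod_congr rfl (fun g hg => ?_)
            have : g ≠ h := (Finset.mem_erase.1 hg).1
            simp [hpf, this]
          rw [hcongr, Finset.prod_ite_mem, Finset.inter_eq_right.2 hBefsub]
        rw [h1, h2]
      have hEq : EqOn F (Fr ∘ priMap) {θ : Student H | θ.1 = r} := by
        intro θ hθ
        have hθ1 : θ.1 = r := hθ
        have hθe : θ = (r, θ.2) := by rw [← hθ1]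
        rw [hθe, hslice r θ.2]
        show _ = Fr (priMap (r, θ.2))
        rw [hsplit]
        have hpri : ∀ g : H, clamp (priMap ((r, θ.2) : Student H) g) = θ.2 g := fun g =>
          clamp_coe (θ.2 g)
        rw [hUimg, Finset.prod_image (fun a _ b _ hab => Option.some_injective H hab)]
        congr 1
        · rw [hpri h]
        · refine Finset.prod_congr rfl (fun g _ => ?_)
          rw [hpri g]
          rfl
      -- move to the pushforward measure
      have step1 : ∫ θ in {θ : Student H | θ.1 = r}, F θ ∂η
          = ∫ θ in {θ : Student H | θ.1 = r}, (Fr ∘ priMap) θ ∂η :=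
        setIntegral_congr_fun (measurableSet_fiber r) hEq
      have hFrmeas : Measurable Fr := by
        refine Finset.measurable_prod _ (fun g _ => ?_)
        by_cases hg : g = h
        · subst hg
          simp only [hpf, if_pos rfl]
          exact (hφm.comp measurable_clamp).comp (measurable_pi_apply g)
        · by_cases hg2 : g ∈ Bef r h
          · simp only [hpf, if_neg hg, if_pos hg2]
            exact (measurable_const.sub (((hAm (some g)).comp measurable_clamp))).comp
              (measurable_pi_apply g)
          · simp only [hpf, if_neg hg, if_neg hg2]
            exact measurable_const
      obtain ⟨c, hc⟩ := hη2 r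
      have hcval : c = η {θ : Student H | θ.1 = r} := by
        have h1 := congrArg (fun μ => μ Set.univ) hc
        simp only [Measure.smul_apply, smul_eq_mul] at h1
        rw [Measure.map_apply measurable_priMap MeasurableSet.univ] at h1
        simp only [Set.preimage_univ, Measure.restrict_apply_univ] at h1
        rw [measure_univ (μ := uniformPriors H), mul_one] at h1
        exact h1.symm
      have step2 : ∫ θ in {θ : Student H | θ.1 = r}, (Fr ∘ priMap) θ ∂η
          = ∫ x, Fr x ∂(Measure.map priMap (η.restrict {θ : Student H | θ.1 = r})) := by
        rw [integral_map measurable_priMap.aemeasurable hFrmeas.aestronglyMeasurable]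
        rfl
      have step3 : ∫ x, Fr x ∂(Measure.map priMap (η.restrict {θ : Student H | θ.1 = r}))
          = cR η r * ∫ x, Fr x ∂(uniformPriors H) := by
        rw [hc, integral_smul_measure, hcval]
        rfl
      have step4 : ∫ x, Fr x ∂(uniformPriors H) = ∏ g : H, ∫ t : RI, pf g t := by
        rw [uniformPriors_eq_volume_pi]
        exact MeasureTheory.integral_fintype_prod_eq_prod (ι := H) pf
      have step5 : ∏ g : H, ∫ t : RI, pf g t
          = (∫ t : RI, φ (clamp (t:ℝ))) * ∏ g ∈ Bef r h, (1 - qA A g) := by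
        rw [← Finset.mul_prod_erase Finset.univ (fun g => ∫ t : RI, pf g t)
          (Finset.mem_univ h)]
        have h1 : ∫ t : RI, pf h t = ∫ t : RI, φ (clamp (t:ℝ)) := by
          simp [hpf]
        have h2 : ∏ g ∈ Finset.univ.erase h, ∫ t : RI, pf g t
            = ∏ g ∈ Bef r h, (1 - qA A g) := by
          have hcongr : ∏ g ∈ Finset.univ.erase h, ∫ t : RI, pf g t
              = ∏ g ∈ Finset.univ.erase h, (if g ∈ Bef r h then 1 - qA A g else 1) := by
            refine Finset.prod_congr rfl (fun g hg => ?_)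
            have hgne : g ≠ h := (Finset.mem_erase.1 hg).1
            by_cases hg2 : g ∈ Bef r h
            · simp only [hpf, if_neg hgne, if_pos hg2]
              rw [integral_sub (integrable_const 1) (integrable_A_clamp A hAm hA0 hAle g)]
              simp [qA]
            · simp only [hpf, if_neg hgne, if_neg hg2]
              simp
          rw [hcongr, Finset.prod_ite_mem, Finset.inter_eq_right.2 hBefsub]
        rw [h1, h2]
      rw [step1, step2, step3, step4, step5]
    · rw [if_neg hlist]
      have hzero : EqOn F (fun _ => (0:ℝ)) {θ : Student H | θ.1 = r} := by
        intro θ hθ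
        have hθ1 : θ.1 = r := hθ
        have hmem : (none : Option H) ∈ Finset.univ.filter
            (fun o => Prefers θ o (some h)) := by
          rw [filter_prefers_eq hθ1, mem_UU]
          letI := r
          rcases lt_trichotomy (α := Option H) (some h) (none : Option H) with hlt | heq | hgt
          · exact hlt
          · exact absurd heq (by simp)
          · exact absurd hgt hlist
        show φ (θ.2 h) * ∏ o ∈ Finset.univ.filter (fun o => Prefers θ o (some h)),
          (1 - A o (priOf θ o)) = 0
        have hz : (1 - A none (priOf θ none)) = 0 := by rw [hA1]; ring
        rw [Finset.prod_eq_zero hmem hz, mul_zero]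
      rw [setIntegral_congr_fun (measurableSet_fiber r) hzero]
      simp
  -- combine
  calc ∫ θ, F θ ∂η
      = ∑ r : LinearOrder (Option H), ∫ θ in {θ : Student H | θ.1 = r}, F θ ∂η :=
        integral_partition η hFint
    _ = ∑ r : LinearOrder (Option H), (if ListedP r h then
          cR η r * ((∫ t : RI, φ (clamp (t:ℝ))) * ∏ g ∈ Bef r h, (1 - qA A g)) else 0) :=
        Finset.sum_congr rfl (fun r _ => hval r)
    _ = (∫ t : RI, φ (clamp (t : ℝ))) * lamOf η A h := by
        rw [lamOf, Finset.mul_sum]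
        refine Finset.sum_congr rfl (fun r _ => ?_)
        split_ifs with hc
        · ring
        · ring

lemma engine_measurable
    (A : AdmissionsFun H)
    (hAm : ∀ o, Measurable (A o))
    (h : H) (φ : unitInterval → ℝ) (hφm : Measurable φ) :
    Measurable (fun θ : Student H => φ (θ.2 h) * ∏ o ∈ Finset.univ.filter
      (fun o => Prefers θ o (some h)), (1 - A o (priOf θ o))) := by
  classical
  refine measurable_of_slices (fun r => ?_)
  have heq : (fun p : H → unitInterval => φ (p h) * ∏ o ∈ Finset.univ.filter
      (fun o => Prefers ((r, p) : Student H) o (some h)), (1 - A o (priOf (r, p) o)))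
      = fun p => φ (p h) * ∏ o ∈ UU r h, (1 - A o (priOf (r, p) o)) := by
    funext p
    rw [filter_prefers_eq (θ := ((r, p) : Student H)) rfl]
  rw [heq]
  refine (hφm.comp (measurable_pi_apply h)).mul ?_
  refine Finset.measurable_prod _ (fun o _ => ?_)
  match o with
  | none =>
      exact (show Measurable (fun _ : H → unitInterval => (1:ℝ) - A none 1)
        from measurable_const)
  | some g =>
      exact (measurable_const.sub ((hAm (some g)).comp (measurable_pi_apply g)))

lemma engine_integrable
    (A : AdmissionsFun H)
    (hAm : ∀ o, Measurable (A o)) (hA0 : ∀ o p, 0 ≤ A o p) (hAle : ∀ o p, A o p ≤ 1)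
    (h : H) (φ : unitInterval → ℝ) (hφm : Measurable φ)
    (hφ0 : ∀ t, 0 ≤ φ t) (hφ1 : ∀ t, φ t ≤ 1) :
    Integrable (fun θ : Student H => φ (θ.2 h) * ∏ o ∈ Finset.univ.filter
      (fun o => Prefers θ o (some h)), (1 - A o (priOf θ o))) η := by
  refine Integrable.mono' (integrable_const 1)
    (engine_measurable A hAm h φ hφm).aestronglyMeasurable (ae_of_all _ fun θ => ?_)
  have hp0 : 0 ≤ (∏ o ∈ Finset.univ.filter (fun o => Prefers θ o (some h)),
      (1 - A o (priOf θ o))) :=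
    Finset.prod_nonneg (fun o _ => by linarith [hAle o (priOf θ o)])
  have hp1 : (∏ o ∈ Finset.univ.filter (fun o => Prefers θ o (some h)),
      (1 - A o (priOf θ o))) ≤ 1 :=
    Finset.prod_le_one (fun o _ => by linarith [hAle o (priOf θ o)])
      (fun o _ => by linarith [hA0 o (priOf θ o)])
  rw [Real.norm_eq_abs, abs_le]
  constructor
  · nlinarith [hφ0 (θ.2 h), hφ1 (θ.2 h)]
  · nlinarith [hφ0 (θ.2 h), hφ1 (θ.2 h)]

end Stmt14Engine

section Stmt14Scalar

open MeasureTheory Set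

lemma volume_RI_as_restrict :
    (volume : Measure RI) = (volume : Measure ℝ).restrict (Set.Icc 0 1) := rfl

lemma RI_integral_eq_Icc (f : ℝ → ℝ) :
    (∫ t : RI, f (t : ℝ)) = ∫ t in Set.Icc (0:ℝ) 1, f t := rfl

lemma clamp_eq_on_Icc {t : ℝ} (ht : t ∈ Set.Icc (0:ℝ) 1) : (clamp t : ℝ) = t := by
  rw [clamp, Set.projIcc_of_mem _ ht]

lemma integral_indicator_clamp (p : unitInterval) :
    (∫ t : RI, (if p ≤ clamp (t : ℝ) then (1:ℝ) else 0)) = 1 - (p : ℝ) := by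
  rw [RI_integral_eq_Icc (fun t => if p ≤ clamp t then (1:ℝ) else 0)]
  have hcongr : EqOn (fun t : ℝ => if p ≤ clamp t then (1:ℝ) else 0)
      (fun t : ℝ => Set.indicator (Set.Ici (p:ℝ)) (fun _ => (1:ℝ)) t) (Set.Icc 0 1) := by
    intro t ht
    simp only [Set.indicator_apply, Set.mem_Ici]
    have h1 : (p ≤ clamp t) ↔ ((p:ℝ) ≤ t) := by
      rw [← Subtype.coe_le_coe, clamp_eq_on_Icc ht]
    simp [h1]
  rw [setIntegral_congr_fun measurableSet_Icc hcongr,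
    setIntegral_indicator measurableSet_Ici]
  have hset : Set.Icc (0:ℝ) 1 ∩ Set.Ici (p:ℝ) = Set.Icc (p:ℝ) 1 := by
    ext t
    simp only [Set.mem_inter_iff, Set.mem_Icc, Set.mem_Ici]
    constructor
    · rintro ⟨⟨_, h2⟩, h3⟩; exact ⟨h3, h2⟩
    · rintro ⟨h1, h2⟩; exact ⟨⟨le_trans p.2.1 h1, h2⟩, h1⟩
  rw [hset]
  rw [setIntegral_const]
  rw [Measure.real, Real.volume_Icc, smul_eq_mul, mul_one, ENNReal.toReal_ofReal (by linarith [p.2.2])]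

lemma integral_exp_clamp (lam : ℝ) (hlam : 0 ≤ lam) :
    lam * (∫ t : RI, Real.exp (-((1 - (clamp (t:ℝ) : ℝ)) * lam))) = 1 - Real.exp (-lam) := by
  rcases eq_or_lt_of_le hlam with hz | hpos
  · rw [← hz]; simp
  rw [RI_integral_eq_Icc (fun t => Real.exp (-((1 - (clamp t : ℝ)) * lam)))]
  have hcongr : EqOn (fun t : ℝ => Real.exp (-((1 - (clamp t : ℝ)) * lam)))
      (fun t : ℝ => Real.exp (-lam) * Real.exp (lam * t)) (Set.Icc 0 1) := by
    intro t ht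
    simp only
    rw [clamp_eq_on_Icc ht, ← Real.exp_add]
    ring_nf
  rw [setIntegral_congr_fun measurableSet_Icc hcongr]
  rw [MeasureTheory.integral_Icc_eq_integral_Ioc, ← intervalIntegral.integral_of_le zero_le_one]
  rw [intervalIntegral.integral_const_mul]
  have hcm : ∫ x in (0:ℝ)..1, Real.exp (lam * x)
      = lam⁻¹ • ∫ x in (lam * 0)..(lam * 1), Real.exp x :=
    intervalIntegral.integral_comp_mul_left (c := lam) (f := Real.exp) (ne_of_gt hpos)
  rw [hcm, integral_exp]
  rw [mul_zero, mul_one, Real.exp_zero, smul_eq_mul]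
  field_simp
  rw [mul_sub, ← Real.exp_add, neg_add_cancel, Real.exp_zero, mul_one]

lemma integral_exp_clamp_mono {lam lam' : ℝ} (h0 : 0 ≤ lam) (h : lam ≤ lam') :
    (∫ t : RI, Real.exp (-((1 - (clamp (t:ℝ) : ℝ)) * lam')))
      ≤ ∫ t : RI, Real.exp (-((1 - (clamp (t:ℝ) : ℝ)) * lam)) := by
  have hmeas : ∀ c : ℝ, Measurable (fun t : RI => Real.exp (-((1 - (clamp (t:ℝ) : ℝ)) * c))) := by
    intro c
    refine Real.measurable_exp.comp (Measurable.neg ?_)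
    exact (measurable_const.sub (measurable_subtype_coe.comp measurable_clamp)).mul
      measurable_const
  have hfac : ∀ t : RI, (0:ℝ) ≤ 1 - (clamp (t:ℝ) : ℝ) := by
    intro t
    have := (clamp (t:ℝ)).2.2
    linarith
  have hbd : ∀ (c : ℝ), 0 ≤ c → ∀ (t : RI), Real.exp (-((1 - (clamp (t:ℝ) : ℝ)) * c)) ≤ 1 := by
    intro c hc t
    rw [Real.exp_le_one_iff, neg_nonpos]
    exact mul_nonneg (hfac t) hc
  have hint : ∀ (c : ℝ), 0 ≤ c →
      Integrable (fun t : RI => Real.exp (-((1 - (clamp (t:ℝ) : ℝ)) * c))) volume := by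
    intro c hc
    refine Integrable.mono' (integrable_const 1) (hmeas c).aestronglyMeasurable
      (ae_of_all _ fun t => ?_)
    rw [Real.norm_eq_abs, abs_of_pos (Real.exp_pos _)]
    exact hbd c hc t
  refine integral_mono (hint lam' (le_trans h0 h)) (hint lam h0) (fun t => ?_)
  rw [Real.exp_le_exp, neg_le_neg_iff]
  exact mul_le_mul_of_nonneg_left h (hfac t)

end Stmt14Scalar

section Stmt14Bound

open MeasureTheory Set

variable {H : Type*} [Fintype H]

noncomputable def someLO (H : Type*) [Fintype H] : LinearOrder H :=
  LinearOrder.lift' (⇑(Fintype.equivFin H)) (Equiv.injective _)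

lemma fiber_measure (η : Measure (Student H)) [IsFiniteMeasure η] (s : LinearOrder H) :
    (η {θ : Student H | RestrictsTo θ.1 s}).toReal
      = ∑ r ∈ Finset.univ.filter (fun r : LinearOrder (Option H) => res r = s), cR η r := by
  classical
  have hset : {θ : Student H | RestrictsTo θ.1 s}
      = ⋃ r ∈ Finset.univ.filter (fun r : LinearOrder (Option H) => res r = s),
          {θ : Student H | θ.1 = r} := by
    ext θ
    simp only [Set.mem_setOf_eq, Set.mem_iUnion, Finset.mem_filter, Finset.mem_univ, true_and]
    constructor
    · intro hres
      exact ⟨θ.1, ⟨res_eq_iff_restrictsTo.2 hres, rfl⟩⟩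
    · rintro ⟨r, hr, rfl⟩
      exact res_eq_iff_restrictsTo.1 hr
  rw [hset, measure_biUnion_finset ?disj (fun r _ => measurableSet_fiber r)]
  · rw [ENNReal.toReal_sum (fun r _ => measure_ne_top η _)]
    rfl
  case disj =>
    intro r hr r' hr' hne
    rw [Function.onFun, Set.disjoint_left]
    intro θ h1 h2
    exact hne (h1.symm.trans h2)

lemma total_measure (η : Measure (Student H)) [IsFiniteMeasure η] :
    (η Set.univ).toReal = ∑ s : LinearOrder H, (η {θ : Student H | RestrictsTo θ.1 s}).toReal := by
  classical
  have hset : (Set.univ : Set (Student H))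
      = ⋃ s ∈ (Finset.univ : Finset (LinearOrder H)), {θ : Student H | RestrictsTo θ.1 s} := by
    ext θ
    simp only [Set.mem_univ, true_iff, Set.mem_iUnion, Finset.mem_univ, true_and]
    exact ⟨res θ.1, ⟨True.intro, restrictsTo_res θ.1⟩⟩
  have hmeas : ∀ s : LinearOrder H, MeasurableSet {θ : Student H | RestrictsTo θ.1 s} := by
    intro s
    have : {θ : Student H | RestrictsTo θ.1 s} = Prod.fst ⁻¹' {r | RestrictsTo r s} := rfl
    rw [this]; exact measurable_fst trivial
  rw [hset, measure_biUnion_finset ?disj (fun s _ => hmeas s)]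
  · rw [ENNReal.toReal_sum (fun s _ => measure_ne_top η _)]
  case disj =>
    intro s hs s' hs' hne
    rw [Function.onFun, Set.disjoint_left]
    intro θ h1 h2
    exact hne (restrictsTo_unique h1 h2)

lemma card_mul_lamOf_le (η : Measure (Student H)) [IsFiniteMeasure η]
    (hη1 : ∀ s t : LinearOrder H,
      η {θ : Student H | RestrictsTo θ.1 s} = η {θ : Student H | RestrictsTo θ.1 t})
    (A : AdmissionsFun H) (x : ℝ) (hx0 : 0 ≤ x)
    (hfac : ∀ g : H, 1 - qA A g ≤ x) (hfac0 : ∀ g : H, 0 ≤ 1 - qA A g) (h : H) :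
    (Fintype.card H : ℝ) * lamOf η A h
      ≤ (η Set.univ).toReal * ∑ i ∈ Finset.range (Fintype.card H), x ^ i := by
  classical
  set w0 : ℝ := (η {θ : Student H | RestrictsTo θ.1 (someLO H)}).toReal with hw0
  have hw0' : ∀ s : LinearOrder H, (η {θ : Student H | RestrictsTo θ.1 s}).toReal = w0 :=
    fun s => by rw [hw0, hη1 s (someLO H)]
  -- step 1: pointwise bound on lamOf
  have hstep1 : lamOf η A h ≤ ∑ r : LinearOrder (Option H),
      cR η r * x ^ aboveCount (res r) h := by
    rw [lamOf]
    refine Finset.sum_le_sum (fun r _ => ?_)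
    split_ifs with hc
    · refine mul_le_mul_of_nonneg_left ?_ (cR_nonneg η r)
      have hcard : (Bef r h).card = aboveCount (res r) h := by
        unfold aboveCount
        congr 1
      calc ∏ g ∈ Bef r h, (1 - qA A g) ≤ ∏ _g ∈ Bef r h, x :=
            Finset.prod_le_prod (fun g _ => hfac0 g) (fun g _ => hfac g)
        _ = x ^ (Bef r h).card := Finset.prod_const x
        _ = x ^ aboveCount (res r) h := by rw [hcard]
    · exact mul_nonneg (cR_nonneg η r) (pow_nonneg hx0 _)
  -- step 2: fiberwise regrouping
  have hstep2 : ∑ r : LinearOrder (Option H), cR η r * x ^ aboveCount (res r) h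
      = ∑ s : LinearOrder H, w0 * x ^ aboveCount s h := by
    rw [← Finset.sum_fiberwise_of_maps_to (g := fun r : LinearOrder (Option H) => res r)
      (t := Finset.univ) (fun r _ => Finset.mem_univ _)
      (fun r => cR η r * x ^ aboveCount (res r) h)]
    refine Finset.sum_congr rfl (fun s _ => ?_)
    have hinner : ∑ r ∈ Finset.univ.filter (fun r : LinearOrder (Option H) => res r = s),
        cR η r * x ^ aboveCount (res r) h
        = ∑ r ∈ Finset.univ.filter (fun r : LinearOrder (Option H) => res r = s),
          cR η r * x ^ aboveCount s h := by
      refine Finset.sum_congr rfl (fun r hr => ?_)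
      rw [(Finset.mem_filter.1 hr).2]
    rw [hinner, ← Finset.sum_mul, ← fiber_measure η s, hw0' s]
  -- step 3: counting
  have hstep3 : (Fintype.card H : ℝ) * ∑ s : LinearOrder H, w0 * x ^ aboveCount s h
      = (η Set.univ).toReal * ∑ i ∈ Finset.range (Fintype.card H), x ^ i := by
    rw [← Finset.mul_sum, ← mul_assoc, mul_comm (Fintype.card H : ℝ) w0, mul_assoc,
      card_mul_sum_pow h x]
    rw [total_measure η, Finset.sum_congr rfl (fun s _ => hw0' s), Finset.sum_const,
      Finset.card_univ, nsmul_eq_mul]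
    ring
  calc (Fintype.card H : ℝ) * lamOf η A h
      ≤ (Fintype.card H : ℝ) * ∑ r : LinearOrder (Option H),
          cR η r * x ^ aboveCount (res r) h :=
        mul_le_mul_of_nonneg_left hstep1 (by positivity)
    _ = (Fintype.card H : ℝ) * ∑ s : LinearOrder H, w0 * x ^ aboveCount s h := by rw [hstep2]
    _ = _ := hstep3

end Stmt14Bound

/-- In a symmetric IID market where every school has a single seat and the
ratio of students to schools is `ρ = n/(n+k) < 1`, the unique `(η^IID, V^pois)`-stable matching
`M` satisfies `AverageRank(M) ≤ ((n+k)/n)·log((n+k)/k)`. -/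
theorem stmt14 {H : Type*} [Fintype H] [Nonempty H] (η : Measure (Student H))
    [IsFiniteMeasure η] (hη : IsSymmetricIID η) (n k : ℕ) (hn : 0 < n) (hk : 0 < k)
    (hmass : (η Set.univ).toReal = (Fintype.card H : ℝ) * ((n : ℝ) / ((n : ℝ) + (k : ℝ))))
    (M : MatchingFun H) (hM : StableMatching η Vpois (fun _ => 1) M) :
    averageRank η M ≤ (((n : ℝ) + (k : ℝ)) / (n : ℝ)) * Real.log (((n : ℝ) + (k : ℝ)) / (k : ℝ)) := by
  classical
  obtain ⟨hMf, hMeq⟩ := hM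
  -- basic scalars
  set m := Fintype.card H with hm
  have hmpos : (0:ℝ) < (m : ℝ) := by
    have : 0 < m := Fintype.card_pos_iff.2 ‹Nonempty H›
    exact_mod_cast this
  have hnR : (0:ℝ) < (n : ℝ) := by exact_mod_cast hn
  have hkR : (0:ℝ) < (k : ℝ) := by exact_mod_cast hk
  have hnkR : (0:ℝ) < (n : ℝ) + (k : ℝ) := by linarith
  set ρ : ℝ := (n : ℝ) / ((n : ℝ) + (k : ℝ)) with hρ
  have hρpos : 0 < ρ := by positivity
  have hρlt : ρ < 1 := by
    rw [hρ, div_lt_one hnkR]; linarith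
  set lstar : ℝ := Real.log (((n:ℝ)+(k:ℝ))/(k:ℝ)) with hlstar
  have hlstarpos : 0 < lstar := by
    rw [hlstar]
    apply Real.log_pos
    rw [lt_div_iff₀ hkR]; linarith
  have hexp : Real.exp (-lstar) = 1 - ρ := by
    rw [hlstar, ← Real.log_inv, Real.exp_log (by positivity)]
    rw [hρ]
    field_simp
    ring
  -- the admissions function
  set A : AdmissionsFun H := admissionsOf Vpois (fun _ => 1) (interestOf η M) with hA
  have hA1 : ∀ p, A none p = 1 := fun p => rfl
  have hAm : ∀ o, Measurable (A o) := measurable_admissionsOf η M hMf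
  have hA0 : ∀ o p, 0 ≤ A o p := fun o p => admissionsOf_nonneg η M o p
  have hAle : ∀ o p, A o p ≤ 1 := fun o p => admissionsOf_le_one η M hMf o p
  -- lambda values
  set lam : H → ℝ := fun h => lamOf η A h with hlamdef
  -- the interest formula
  have hIformula : ∀ (h : H) (p : unitInterval),
      interestOf η M h p = (1 - (p:ℝ)) * lam h := by
    intro h p
    set φp : unitInterval → ℝ := fun t => if p ≤ t then (1:ℝ) else 0 with hφp
    have hφpm : Measurable φp := by
      have hset : MeasurableSet {t : unitInterval | p ≤ t} := by
        have he : {t : unitInterval | p ≤ t} = (fun t : unitInterval => (t:ℝ))⁻¹' (Set.Ici (p:ℝ)) := by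
          ext t
          simp only [Set.mem_setOf_eq, Set.mem_preimage, Set.mem_Ici, Subtype.coe_le_coe]
        rw [he]; exact measurable_subtype_coe measurableSet_Ici
      exact Measurable.ite hset measurable_const measurable_const
    have hφp0 : ∀ t, 0 ≤ φp t := fun t => by by_cases h' : p ≤ t <;> simp [hφp, h']
    have hφp1 : ∀ t, φp t ≤ 1 := fun t => by by_cases h' : p ≤ t <;> simp [hφp, h']
    have h1 : interestOf η M h p
        = ∫ θ, φp (θ.2 h) * ∏ o ∈ Finset.univ.filter (fun o => Prefers θ o (some h)),
            (1 - A o (priOf θ o)) ∂η := by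
      show (∫ θ, (if p ≤ θ.2 h then (1:ℝ) else 0) *
        (1 - ∑ h' ∈ Finset.univ.filter (fun h' : Option H => Prefers θ h' (some h)), M θ h') ∂η) = _
      congr 1
      funext θ
      rw [hMeq]
      rw [one_sub_sum_prefers A θ (some h)]
    rw [h1, engine η hη.2 A hA1 hAm hA0 hAle h φp hφpm hφp0 hφp1]
    have h2 : (∫ t : RI, φp (clamp (t:ℝ))) = 1 - (p:ℝ) := integral_indicator_clamp p
    rw [h2, hlamdef]
  -- formula for A at schools
  have hAval : ∀ (h : H) (p : unitInterval),
      A (some h) p = Real.exp (-((1 - (p:ℝ)) * lam h)) := by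
    intro h p
    show Vpois (interestOf η M h p) 1 = _
    rw [Vpois_one, hIformula]
  have hlam0 : ∀ h, 0 ≤ lam h := by
    intro h
    have h1 := interestOf_nonneg η M hMf h 0
    rw [hIformula h 0] at h1
    have h2 : ((0 : unitInterval) : ℝ) = 0 := rfl
    rw [h2] at h1
    linarith
  -- q values
  have hq : ∀ h : H, qA A h = ∫ t : RI, Real.exp (-((1 - (clamp (t:ℝ) : ℝ)) * lam h)) := by
    intro h
    show (∫ t : RI, A (some h) (clamp (t:ℝ))) = _
    congr 1
    funext t
    rw [hAval]
  have hqlam : ∀ h : H, lam h * qA A h = 1 - Real.exp (-(lam h)) := by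
    intro h
    rw [hq h]
    exact integral_exp_clamp (lam h) (hlam0 h)
  have hq0 : ∀ h, 0 ≤ qA A h := fun h => qA_nonneg A hA0 h
  have hq1 : ∀ h, qA A h ≤ 1 := fun h => qA_le_one A hAm hA0 hAle h
  -- the school with minimal admission chance
  obtain ⟨hstar, _, hminstar⟩ := Finset.exists_min_image Finset.univ (fun h => qA A h)
    ⟨Classical.arbitrary H, Finset.mem_univ _⟩
  set x : ℝ := 1 - qA A hstar with hx
  have hx0 : 0 ≤ x := by rw [hx]; linarith [hq1 hstar]
  have hxlt : 1 - x = qA A hstar := by rw [hx]; ring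
  have hfac : ∀ g : H, 1 - qA A g ≤ x := by
    intro g
    rw [hx]
    linarith [hminstar g (Finset.mem_univ g)]
  have hfac0 : ∀ g : H, 0 ≤ 1 - qA A g := fun g => by linarith [hq1 g]
  -- the counting bound
  have hlam_le : ∀ h : H, lam h ≤ ρ * ∑ i ∈ Finset.range m, x ^ i := by
    intro h
    have h1 := card_mul_lamOf_le η hη.1 A x hx0 hfac hfac0 h
    rw [hmass] at h1
    rw [hlamdef]
    have h2 : (m:ℝ) * lamOf η A h ≤ (m:ℝ) * (ρ * ∑ i ∈ Finset.range m, x ^ i) := by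
      calc (m:ℝ) * lamOf η A h ≤ (m : ℝ) * ρ * ∑ i ∈ Finset.range m, x ^ i := h1
        _ = (m:ℝ) * (ρ * ∑ i ∈ Finset.range m, x ^ i) := by ring
    exact le_of_mul_le_mul_left h2 hmpos
  -- the key inequality : lam h * qA A hstar ≤ ρ for every h
  have hkey : ∀ h : H, lam h * qA A hstar ≤ ρ := by
    intro h
    have hgeom : (∑ i ∈ Finset.range m, x ^ i) * (1 - x) = 1 - x ^ m := by
      have := geom_sum_mul x m
      nlinarith [this]
    calc lam h * qA A hstar = lam h * (1 - x) := by rw [hxlt]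
      _ ≤ (ρ * ∑ i ∈ Finset.range m, x ^ i) * (1 - x) := by
          refine mul_le_mul_of_nonneg_right (hlam_le h) ?_
          rw [hxlt]; exact hq0 hstar
      _ = ρ * ((∑ i ∈ Finset.range m, x ^ i) * (1 - x)) := by ring
      _ = ρ * (1 - x ^ m) := by rw [hgeom]
      _ ≤ ρ := by nlinarith [pow_nonneg hx0 m, hρpos]
  -- lam hstar ≤ lstar
  have hstar_le : lam hstar ≤ lstar := by
    have h1 : 1 - Real.exp (-(lam hstar)) ≤ ρ := by
      rw [← hqlam hstar]; exact hkey hstar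
    have h2 : Real.exp (-lstar) ≤ Real.exp (-(lam hstar)) := by
      rw [hexp]; linarith
    have h3 := Real.exp_le_exp.1 h2
    linarith
  -- qA A hstar ≥ ρ / lstar
  have hJlstar : lstar * (∫ t : RI, Real.exp (-((1 - (clamp (t:ℝ) : ℝ)) * lstar))) = ρ := by
    rw [integral_exp_clamp lstar hlstarpos.le, hexp]; ring
  have hqstar_ge : ρ / lstar ≤ qA A hstar := by
    have h1 : (∫ t : RI, Real.exp (-((1 - (clamp (t:ℝ) : ℝ)) * lstar)))
        ≤ ∫ t : RI, Real.exp (-((1 - (clamp (t:ℝ) : ℝ)) * lam hstar)) :=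
      integral_exp_clamp_mono (hlam0 hstar) hstar_le
    rw [← hq hstar] at h1
    have h2 : ∫ t : RI, Real.exp (-((1 - (clamp (t:ℝ) : ℝ)) * lstar)) = ρ / lstar := by
      field_simp at hJlstar ⊢
      linarith [hJlstar]
    linarith [h2 ▸ h1]
  have hqstar_pos : 0 < qA A hstar := lt_of_lt_of_le (by positivity) hqstar_ge
  -- all lam h ≤ lstar
  have hlam_lstar : ∀ h : H, lam h ≤ lstar := by
    intro h
    have h1 : lam h * (ρ / lstar) ≤ lam h * qA A hstar :=
      mul_le_mul_of_nonneg_left hqstar_ge (hlam0 h)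
    have h2 : lam h * (ρ / lstar) ≤ ρ := le_trans h1 (hkey h)
    have h3 : lam h * ρ ≤ ρ * lstar := by
      have h4 := mul_le_mul_of_nonneg_right h2 hlstarpos.le
      rw [mul_assoc, div_mul_cancel₀ _ (ne_of_gt hlstarpos)] at h4
      linarith
    nlinarith [hρpos]
  -- all qA A h ≥ ρ / lstar
  have hq_ge : ∀ h : H, ρ / lstar ≤ qA A h := by
    intro h
    have h1 : (∫ t : RI, Real.exp (-((1 - (clamp (t:ℝ) : ℝ)) * lstar)))
        ≤ ∫ t : RI, Real.exp (-((1 - (clamp (t:ℝ) : ℝ)) * lam h)) :=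
      integral_exp_clamp_mono (hlam0 h) (hlam_lstar h)
    rw [← hq h] at h1
    have h2 : ∫ t : RI, Real.exp (-((1 - (clamp (t:ℝ) : ℝ)) * lstar)) = ρ / lstar := by
      field_simp at hJlstar ⊢
      linarith [hJlstar]
    linarith [h2 ▸ h1]
  -- per-school bound : lam h ≤ (lstar/ρ) * (qA A h * lam h)
  have hper : ∀ h : H, lam h ≤ (lstar / ρ) * (qA A h * lam h) := by
    intro h
    have h1 : 1 ≤ (lstar / ρ) * qA A h := by
      have h2 : (lstar / ρ) * (ρ / lstar) = 1 := by
        field_simp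
      calc (1:ℝ) = (lstar / ρ) * (ρ / lstar) := h2.symm
        _ ≤ (lstar / ρ) * qA A h :=
            mul_le_mul_of_nonneg_left (hq_ge h) (by positivity)
    calc lam h = 1 * lam h := by ring
      _ ≤ ((lstar / ρ) * qA A h) * lam h := mul_le_mul_of_nonneg_right h1 (hlam0 h)
      _ = (lstar / ρ) * (qA A h * lam h) := by ring
  -- integrals of the reach products
  have hGh : ∀ h : H, (∫ θ, (∏ o ∈ Finset.univ.filter (fun o => Prefers θ o (some h)),
      (1 - A o (priOf θ o))) ∂η) = lam h := by
    intro h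
    calc (∫ θ, (∏ o ∈ Finset.univ.filter (fun o => Prefers θ o (some h)),
        (1 - A o (priOf θ o))) ∂η)
        = ∫ θ, (fun _ : unitInterval => (1:ℝ)) (θ.2 h) *
            ∏ o ∈ Finset.univ.filter (fun o => Prefers θ o (some h)),
              (1 - A o (priOf θ o)) ∂η := by
          congr 1
          funext θ
          simp
      _ = (∫ t : RI, (fun _ : unitInterval => (1:ℝ)) (clamp (t:ℝ))) * lamOf η A h :=
          engine η hη.2 A hA1 hAm hA0 hAle h (fun _ => (1:ℝ)) measurable_const
            (fun _ => zero_le_one) (fun _ => le_refl 1)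
      _ = lam h := by
          rw [hlamdef]
          simp
  have hmu : ∀ h : H, (∫ θ, matchingOf A θ (some h) ∂η) = qA A h * lam h := by
    intro h
    calc (∫ θ, matchingOf A θ (some h) ∂η)
        = ∫ θ, A (some h) (θ.2 h) * ∏ o ∈ Finset.univ.filter
            (fun o => Prefers θ o (some h)), (1 - A o (priOf θ o)) ∂η := rfl
      _ = (∫ t : RI, A (some h) (clamp (t:ℝ))) * lamOf η A h :=
          engine η hη.2 A hA1 hAm hA0 hAle h (A (some h)) (hAm _)
            (fun t => hA0 _ t) (fun t => hAle _ t)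
      _ = qA A h * lam h := rfl
  -- integrability
  have hint_prod : ∀ h : H, Integrable (fun θ => ∏ o ∈ Finset.univ.filter
      (fun o => Prefers θ o (some h)), (1 - A o (priOf θ o))) η := by
    intro h
    have h1 := engine_integrable η A hAm hA0 hAle h (fun _ => (1:ℝ)) measurable_const
      (fun _ => zero_le_one) (fun _ => le_refl 1)
    have h2 : (fun θ : Student H => (fun _ : unitInterval => (1:ℝ)) (θ.2 h) *
        ∏ o ∈ Finset.univ.filter (fun o => Prefers θ o (some h)), (1 - A o (priOf θ o)))
        = fun θ => ∏ o ∈ Finset.univ.filter (fun o => Prefers θ o (some h)),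
            (1 - A o (priOf θ o)) := by
      funext θ; simp
    rwa [h2] at h1
  have hint_mu : ∀ h : H, Integrable (fun θ => matchingOf A θ (some h)) η := fun h =>
    engine_integrable η A hAm hA0 hAle h (A (some h)) (hAm _)
      (fun t => hA0 _ t) (fun t => hAle _ t)
  have hrankmeas : ∀ h : H, Measurable (fun θ : Student H => (rankOf θ h : ℝ)) := by
    intro h
    refine measurable_of_slices (fun r => ?_)
    exact (show Measurable (fun _ : H → unitInterval =>
      ((rankOf ((r, fun _ => 0) : Student H) h : ℝ))) from measurable_const)
  have hrankbdd : ∀ (h : H) (θ : Student H), (rankOf θ h : ℝ) ≤ (m:ℝ) + 1 := by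
    intro h θ
    have h1 : rankOf θ h ≤ Fintype.card (Option H) := by
      rw [rankOf]
      calc (Finset.univ.filter _).card ≤ (Finset.univ : Finset (Option H)).card :=
            Finset.card_filter_le _ _
        _ = Fintype.card (Option H) := Finset.card_univ
    rw [Fintype.card_option] at h1
    have h2 : (rankOf θ h : ℝ) ≤ ((m + 1 : ℕ) : ℝ) := by exact_mod_cast h1
    push_cast at h2
    linarith
  have hint_num : Integrable (fun θ => ∑ h : H, matchingOf A θ (some h) *
      (rankOf θ h : ℝ)) η := by
    refine integrable_finset_sum _ (fun h _ => ?_)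
    have h1 : Integrable (fun θ : Student H => (rankOf θ h : ℝ) *
        matchingOf A θ (some h)) η := by
      refine Integrable.bdd_mul (hint_mu h) (hrankmeas h).aestronglyMeasurable
        (c := (m:ℝ)+1) (ae_of_all _ fun θ => ?_)
      rw [Real.norm_eq_abs, abs_of_nonneg (by positivity)]
      exact hrankbdd h θ
    have h2 : (fun θ : Student H => matchingOf A θ (some h) * (rankOf θ h : ℝ))
        = fun θ => (rankOf θ h : ℝ) * matchingOf A θ (some h) := by
      funext θ; ring
    rwa [h2]
  have hint_sumG : Integrable (fun θ => ∑ h : H, ∏ o ∈ Finset.univ.filter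
      (fun o => Prefers θ o (some h)), (1 - A o (priOf θ o))) η :=
    integrable_finset_sum _ (fun h _ => hint_prod h)
  -- the numerator bound
  have hN : (∫ θ, ∑ h : H, matchingOf A θ (some h) * (rankOf θ h : ℝ) ∂η)
      ≤ ∑ h : H, lam h := by
    calc (∫ θ, ∑ h : H, matchingOf A θ (some h) * (rankOf θ h : ℝ) ∂η)
        ≤ ∫ θ, ∑ h : H, ∏ o ∈ Finset.univ.filter (fun o => Prefers θ o (some h)),
            (1 - A o (priOf θ o)) ∂η := by
          refine integral_mono hint_num hint_sumG (fun θ => ?_)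
          have hs : ∑ o : Option H, matchingOf A θ o = 1 := by
            have h1 := (hMf θ).2
            rw [hMeq] at h1
            exact h1
          have hnn : ∀ o, 0 ≤ matchingOf A θ o := by
            intro o
            have h1 := (hMf θ).1 o
            rw [hMeq] at h1
            exact h1
          exact rank_bound_pointwise A hA1 θ hs hnn
      _ = ∑ h : H, ∫ θ, ∏ o ∈ Finset.univ.filter (fun o => Prefers θ o (some h)),
            (1 - A o (priOf θ o)) ∂η := integral_finset_sum _ (fun h _ => hint_prod h)
      _ = ∑ h : H, lam h := Finset.sum_congr rfl (fun h _ => hGh h)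
  -- the denominator value
  have hD : (∫ θ, ∑ h : H, matchingOf A θ (some h) ∂η) = ∑ h : H, qA A h * lam h := by
    rw [integral_finset_sum _ (fun h _ => hint_mu h)]
    exact Finset.sum_congr rfl (fun h _ => hmu h)
  have hD0 : 0 ≤ ∑ h : H, qA A h * lam h :=
    Finset.sum_nonneg (fun h _ => mul_nonneg (hq0 h) (hlam0 h))
  have hND : (∫ θ, ∑ h : H, matchingOf A θ (some h) * (rankOf θ h : ℝ) ∂η)
      ≤ (lstar / ρ) * ∫ θ, ∑ h : H, matchingOf A θ (some h) ∂η := by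
    rw [hD]
    calc (∫ θ, ∑ h : H, matchingOf A θ (some h) * (rankOf θ h : ℝ) ∂η)
        ≤ ∑ h : H, lam h := hN
      _ ≤ ∑ h : H, (lstar / ρ) * (qA A h * lam h) :=
          Finset.sum_le_sum (fun h _ => hper h)
      _ = (lstar / ρ) * ∑ h : H, qA A h * lam h := by rw [Finset.mul_sum]
  -- conclusion
  have hRHSeq : (((n:ℝ)+(k:ℝ))/(n:ℝ)) * Real.log (((n:ℝ)+(k:ℝ))/(k:ℝ)) = lstar / ρ := by
    rw [hlstar, hρ, div_div_eq_mul_div]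
    ring
  rw [hMeq]
  show (∫ θ, ∑ h : H, matchingOf A θ (some h) * (rankOf θ h : ℝ) ∂η)
      / (∫ θ, ∑ h : H, matchingOf A θ (some h) ∂η) ≤ _
  rcases eq_or_lt_of_le hD0 with hDz | hDpos
  · rw [← hD] at hDz
    rw [← hDz, div_zero, hRHSeq]
    positivity
  · rw [← hD] at hDpos
    rw [div_le_iff₀ hDpos, hRHSeq]
    exact hND
end
end

section
/- For any integer ℓ ≥ 1, the function AR : (0,1] → ℝ₊ defined by AR(q) = 1/q − ℓ·(1−q)^ℓ/(1 − (1−q)^ℓ) is weakly decreasing in q on (0,1]. -/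
lemma tw (x y : ℝ) (hy : 0 ≤ y) (hxy : y ≤ x) (j i : ℕ) (hji : j ≤ i) :
    x ^ j * y ^ i ≤ y ^ j * x ^ i := by
  have hx0 : 0 ≤ x := hy.trans hxy
  have h1 : y ^ i = y ^ j * y ^ (i - j) := by rw [← pow_add]; congr 1; omega
  have h1' : x ^ i = x ^ j * x ^ (i - j) := by rw [← pow_add]; congr 1; omega
  have h2 : y ^ (i - j) ≤ x ^ (i - j) := pow_le_pow_left₀ hy hxy _
  calc x ^ j * y ^ i = (x ^ j * y ^ j) * y ^ (i - j) := by rw [h1]; ring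
    _ ≤ (x ^ j * y ^ j) * x ^ (i - j) := by
        apply mul_le_mul_of_nonneg_left h2 (by positivity)
    _ = y ^ j * x ^ i := by rw [h1']; ring

lemma key (x y : ℝ) (hy : 0 ≤ y) (hxy : y ≤ x) (hx : x ≤ 1) (k l : ℕ) (hk : k ≤ l) :
    (1 - x ^ k) * (1 - y ^ l) ≤ (1 - y ^ k) * (1 - x ^ l) := by
  have hy1 : y ≤ 1 := hxy.trans hx
  have e1 : 1 - x ^ k = (1 - x) * ∑ i ∈ Finset.range k, x ^ i := by
    linear_combination geom_sum_mul x k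
  have e2 : 1 - y ^ k = (1 - y) * ∑ i ∈ Finset.range k, y ^ i := by
    linear_combination geom_sum_mul y k
  have e3 : 1 - x ^ l = (1 - x) * ∑ i ∈ Finset.range l, x ^ i := by
    linear_combination geom_sum_mul x l
  have e4 : 1 - y ^ l = (1 - y) * ∑ i ∈ Finset.range l, y ^ i := by
    linear_combination geom_sum_mul y l
  have hBx : ∑ i ∈ Finset.range l, x ^ i
      = (∑ i ∈ Finset.range k, x ^ i) + ∑ i ∈ Finset.Ico k l, x ^ i := by
    rw [Finset.range_eq_Ico, Finset.range_eq_Ico]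
    exact (Finset.sum_Ico_consecutive _ (Nat.zero_le k) hk).symm
  have hBy : ∑ i ∈ Finset.range l, y ^ i
      = (∑ i ∈ Finset.range k, y ^ i) + ∑ i ∈ Finset.Ico k l, y ^ i := by
    rw [Finset.range_eq_Ico, Finset.range_eq_Ico]
    exact (Finset.sum_Ico_consecutive _ (Nat.zero_le k) hk).symm
  have step : (∑ j ∈ Finset.range k, x ^ j) * (∑ i ∈ Finset.Ico k l, y ^ i)
      ≤ (∑ j ∈ Finset.range k, y ^ j) * (∑ i ∈ Finset.Ico k l, x ^ i) := by
    rw [Finset.sum_mul_sum, Finset.sum_mul_sum]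
    apply Finset.sum_le_sum
    intro j hj
    apply Finset.sum_le_sum
    intro i hi
    have hj' := Finset.mem_range.mp hj
    have hi' := (Finset.mem_Ico.mp hi).1
    exact tw x y hy hxy j i (by omega)
  have main : (∑ i ∈ Finset.range k, x ^ i) * (∑ i ∈ Finset.range l, y ^ i)
      ≤ (∑ i ∈ Finset.range k, y ^ i) * (∑ i ∈ Finset.range l, x ^ i) := by
    rw [hBx, hBy]; nlinarith [step]
  have h0 : 0 ≤ (1 - x) * (1 - y) := mul_nonneg (by linarith) (by linarith)
  have H := mul_nonneg h0 (sub_nonneg.2 main)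
  rw [e1, e2, e3, e4]
  nlinarith [H]

lemma reprAR (l : ℕ) (q : ℝ) (hq : 0 < q) (hd : (1 - q) ^ l < 1) :
    1 / q - (l : ℝ) * (1 - q) ^ l / (1 - (1 - q) ^ l)
      = l - (∑ k ∈ Finset.range l, (1 - (1 - q) ^ k)) / (1 - (1 - q) ^ l) := by
  have hS : q * ∑ k ∈ Finset.range l, (1 - q) ^ k = 1 - (1 - q) ^ l := by
    linear_combination - geom_sum_mul (1 - q) l
  have hd' : (1 : ℝ) - (1 - q) ^ l ≠ 0 := by linarith
  have hsum : (∑ k ∈ Finset.range l, (1 - (1 - q) ^ k))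
      = l - ∑ k ∈ Finset.range l, (1 - q) ^ k := by
    rw [Finset.sum_sub_distrib]
    simp
  have hden : (0:ℝ) < 1 - (1 - q) ^ l := by linarith
  have h1 : 1 / q = (∑ k ∈ Finset.range l, (1 - q) ^ k) / (1 - (1 - q) ^ l) := by
    rw [div_eq_div_iff hq.ne' hden.ne']
    linear_combination - hS
  rw [hsum, h1, ← sub_div, eq_sub_iff_add_eq, ← add_div, div_eq_iff hden.ne']
  ring


/-- For any integer `ℓ ≥ 1`, the function
`AR(q) = 1/q − ℓ·(1−q)^ℓ/(1 − (1−q)^ℓ)` is weakly decreasing on `(0, 1]`. -/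
theorem stmt19 (l : ℕ) (hl : 1 ≤ l) :
    AntitoneOn (fun q : ℝ => 1 / q - (l : ℝ) * (1 - q) ^ l / (1 - (1 - q) ^ l))
      (Set.Ioc (0 : ℝ) 1) := by
  intro a ha b hb hab
  obtain ⟨ha0, ha1⟩ := ha
  obtain ⟨hb0, hb1⟩ := hb
  have hxl : (1 - a) ^ l < 1 := by
    apply pow_lt_one₀ (by linarith) (by linarith) (by omega)
  have hyl : (1 - b) ^ l < 1 := by
    apply pow_lt_one₀ (by linarith) (by linarith) (by omega)
  have hda : (0:ℝ) < 1 - (1 - a) ^ l := by linarith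
  have hdb : (0:ℝ) < 1 - (1 - b) ^ l := by linarith
  simp only
  rw [reprAR l a ha0 hxl, reprAR l b hb0 hyl]
  have hT : (∑ k ∈ Finset.range l, (1 - (1 - a) ^ k)) / (1 - (1 - a) ^ l)
      ≤ (∑ k ∈ Finset.range l, (1 - (1 - b) ^ k)) / (1 - (1 - b) ^ l) := by
    rw [div_le_div_iff₀ hda hdb, Finset.sum_mul, Finset.sum_mul]
    apply Finset.sum_le_sum
    intro k hk
    exact key (1 - a) (1 - b) (by linarith) (by linarith) (by linarith) k l
      (le_of_lt (Finset.mem_range.mp hk))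
  linarith
end
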